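/- arXiv:0806.1309 — 2 statements merged into one kernel-verified Lean document; each statement's English description precedes it below -/
import Mathlib

section
/- With the notation of the de Gennes operator: Θ₀ = μ(ξ₀) = ξ₀² where ξ₀ < 0 is the minimizer of μ, and consequently C₁/2 − Θ₀ξ₀ = M₃ − ξ₀³ > 0, where M₃ = ∫_{t>0}(t+ξ₀)³ u_{ξ₀}(t)² dt and C₁ = u_{ξ₀}(0)²/3. -/
set_option maxHeartbeats 1600000


open MeasureTheory Set

namespace DeGennesAux
open Filter Real Topology



lemma deriv_contDiff {u : ℝ → ℝ} (hu : ContDiff ℝ (⊤ : ℕ∞) u) : ContDiff ℝ (↑(⊤:ℕ∞)) (deriv u) :=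
  (contDiff_infty_iff_deriv.mp (hu.of_le (by simp))).2

lemma deriv_cont {u : ℝ → ℝ} (hu : ContDiff ℝ (⊤ : ℕ∞) u) : Continuous (deriv u) :=
  (deriv_contDiff hu).continuous

lemma deriv2_cont {u : ℝ → ℝ} (hu : ContDiff ℝ (⊤ : ℕ∞) u) : Continuous (deriv (deriv u)) :=
  ((contDiff_infty_iff_deriv.mp (deriv_contDiff hu)).2).continuous

lemma hasDerivAt_u {u : ℝ → ℝ} (hu : ContDiff ℝ (⊤ : ℕ∞) u) (t : ℝ) : HasDerivAt u (deriv u t) t :=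
  ((hu.differentiable (by simp)) t).hasDerivAt

lemma hasDerivAt_du {u : ℝ → ℝ} (hu : ContDiff ℝ (⊤ : ℕ∞) u) (t : ℝ) :
    HasDerivAt (deriv u) (deriv (deriv u) t) t :=
  (((contDiff_infty_iff_deriv.mp (deriv_contDiff hu)).1) t).hasDerivAt

lemma integrableOn_Ioi_of_exp_bound {f : ℝ → ℝ} (hf : Continuous f) (T C : ℝ)
    (h : ∀ t, T ≤ t → |f t| ≤ C * exp (-t)) : IntegrableOn f (Ioi 0) := by
  set T' := max T 0 with hT'
  have h1 : IntegrableOn f (Ioc 0 T') := hf.integrableOn_Ioc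
  have h2 : IntegrableOn f (Ioi T') := by
    have hg : IntegrableOn (fun t => |C| * exp (-t)) (Ioi T') := by
      have := (exp_neg_integrableOn_Ioi T' (one_pos)).const_mul |C|
      simpa [neg_one_mul, IntegrableOn] using this
    refine Integrable.mono hg hf.aestronglyMeasurable ?_
    filter_upwards [ae_restrict_mem measurableSet_Ioi] with t ht
    have ht' : T ≤ t := le_trans (le_max_left _ _) (le_of_lt ht)
    have h3 := h t ht'
    have hC : C * exp (-t) ≤ |C| * exp (-t) := by
      have := le_abs_self C
      nlinarith [exp_pos (-t)]
    simp only [norm_eq_abs]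
    rw [abs_of_nonneg (by positivity : (0:ℝ) ≤ |C| * exp (-t))]
    linarith
  have h4 : IntegrableOn f (Ioc 0 T' ∪ Ioi T') := h1.union h2
  refine h4.mono_set ?_
  intro x hx
  rcases le_or_gt x T' with h | h
  · exact Or.inl ⟨hx, h⟩
  · exact Or.inr h

lemma tendsto_zero_of_poly4_exp {G : ℝ → ℝ} (K T : ℝ)
    (h : ∀ t, T ≤ t → |G t| ≤ K * (t ^ 4 * exp (-2 * t))) : Tendsto G atTop (𝓝 0) := by
  have h2 : Tendsto (fun t : ℝ => t ^ 4 * exp (-2 * t)) atTop (𝓝 0) := by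
    have ha := tendsto_pow_mul_exp_neg_atTop_nhds_zero 4
    have hb : Tendsto (fun t : ℝ => exp (-t)) atTop (𝓝 0) :=
      Real.tendsto_exp_atBot.comp tendsto_neg_atTop_atBot
    have hc := ha.mul hb
    rw [mul_zero] at hc
    refine hc.congr (fun t => ?_)
    rw [mul_assoc, ← Real.exp_add]; ring_nf
  have h1 : Tendsto (fun t : ℝ => K * (t ^ 4 * exp (-2 * t))) atTop (𝓝 0) := by
    simpa using h2.const_mul K
  refine squeeze_zero_norm' ?_ h1
  filter_upwards [eventually_ge_atTop T] with t ht
  rw [norm_eq_abs]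
  exact h t ht

lemma integral_Ioi_eq {G F : ℝ → ℝ} {L : ℝ}
    (hder : ∀ t, 0 ≤ t → HasDerivAt G (F t) t) (hcont : Continuous F)
    (hint : IntegrableOn F (Ioi 0)) (hlim : Tendsto G atTop (𝓝 L)) :
    ∫ t in Ioi (0:ℝ), F t = L - G 0 := by
  have h1 : Tendsto (fun X => ∫ t in (0:ℝ)..X, F t) atTop (𝓝 (∫ t in Ioi (0:ℝ), F t)) :=
    intervalIntegral_tendsto_integral_Ioi 0 hint tendsto_id
  have h2 : ∀ᶠ X in atTop, (∫ t in (0:ℝ)..X, F t) = G X - G 0 := by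
    filter_upwards [eventually_ge_atTop (0:ℝ)] with X hX
    refine intervalIntegral.integral_eq_sub_of_hasDerivAt (fun t ht => ?_)
      (hcont.intervalIntegrable 0 X)
    rw [uIcc_of_le hX] at ht
    exact hder t ht.1
  have h3 : Tendsto (fun X => G X - G 0) atTop (𝓝 (L - G 0)) := hlim.sub_const _
  exact tendsto_nhds_unique (h1.congr' h2) h3


variable {u : ℝ → ℝ} {μ ξ : ℝ}

lemma decay (hu : ContDiff ℝ (⊤ : ℕ∞) u)
    (heq : ∀ t, 0 ≤ t → deriv (deriv u) t = ((t + ξ)^2 - μ) * u t)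
    (hpos : ∀ t, 0 ≤ t → 0 < u t)
    (hint : IntegrableOn (fun t => (u t)^2) (Ioi 0))
    (hnorm : ∫ t in Ioi (0:ℝ), (u t)^2 = 1) :
    ∃ T C, 1 ≤ T ∧ 0 < C ∧ ∀ t, T ≤ t →
      u t ≤ C * exp (-t) ∧ |deriv u t| ≤ C * exp (-t) := by
  have hud : ∀ t, HasDerivAt u (deriv u t) t := fun t => ((hu.differentiable (by simp)) t).hasDerivAt
  have hudd : ∀ t, HasDerivAt (deriv u) (deriv (deriv u) t) t := fun t =>
    (((contDiff_infty_iff_deriv.mp ((contDiff_infty_iff_deriv.mp (hu.of_le (by simp))).2)).1) t).hasDerivAt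
  have hducont : Continuous (deriv u) := ((contDiff_infty_iff_deriv.mp (hu.of_le (by simp))).2).continuous
  set T₀ : ℝ := 1 + |ξ| + |μ| with hT₀def
  have hT₀1 : 1 ≤ T₀ := by
    have := abs_nonneg ξ; have := abs_nonneg μ; simp only [hT₀def]; linarith
  have hT₀0 : 0 < T₀ := by linarith
  have hT₀ : ∀ t, T₀ ≤ t → 1 ≤ (t + ξ)^2 - μ := by
    intro t ht
    have h1 : 1 + |μ| ≤ t + ξ := by
      have := neg_abs_le ξ; simp only [hT₀def] at ht; linarith
    nlinarith [abs_nonneg μ, le_abs_self μ]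
  have hddpos : ∀ t, T₀ ≤ t → 0 < deriv (deriv u) t ∧ u t ≤ deriv (deriv u) t := by
    intro t ht
    have ht0 : (0:ℝ) ≤ t := le_trans (by linarith) ht
    have hup := hpos t ht0
    rw [heq t ht0]
    constructor
    · nlinarith [hT₀ t ht]
    · nlinarith [hT₀ t ht]
  -- deriv u is strictly monotone on [T₀, ∞)
  have hmono : StrictMonoOn (deriv u) (Ici T₀) := by
    refine strictMonoOn_of_deriv_pos (convex_Ici T₀) hducont.continuousOn (fun x hx => ?_)
    rw [interior_Ici] at hx
    exact (hddpos x (le_of_lt hx)).1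
  -- deriv u < 0 on [T₀, ∞)
  have hneg : ∀ a, T₀ ≤ a → deriv u a < 0 := by
    intro a ha
    by_contra hcon
    push_neg at hcon
    have hmon2 : MonotoneOn u (Ici a) := by
      refine monotoneOn_of_deriv_nonneg (convex_Ici a) (hu.continuous).continuousOn
        (fun x hx => ((hu.differentiable (by simp)) x).differentiableWithinAt) (fun x hx => ?_)
      rw [interior_Ici] at hx
      exact le_of_lt (lt_of_le_of_lt hcon (hmono (mem_Ici.mpr ha) (mem_Ici.mpr (le_trans ha (le_of_lt hx))) hx))
    have ha0 : (0:ℝ) < a := lt_of_lt_of_le hT₀0 ha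
    set δ := u a with hδ
    have hδpos : 0 < δ := hpos a (le_of_lt ha0)
    set b := a + 2 / δ^2 with hb
    have hab : a < b := by
      have h0 : 0 < 2/δ^2 := by positivity
      rw [hb]; linarith
    have key : (∫ t in Ioc a b, (u t)^2) ≤ 1 := by
      rw [← hnorm]
      refine setIntegral_mono_set hint ?_ ?_
      · filter_upwards with t using sq_nonneg _
      · refine HasSubset.Subset.eventuallyLE (fun x hx => ?_)
        exact lt_of_lt_of_le ha0 (le_of_lt hx.1)
    have low : ∀ t ∈ Ioc a b, δ^2 ≤ (u t)^2 := by
      intro t ht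
      have h1 : δ ≤ u t := hmon2 (mem_Ici.mpr le_rfl) (mem_Ici.mpr (le_of_lt ht.1)) (le_of_lt ht.1)
      nlinarith
    have big : 2 ≤ ∫ t in Ioc a b, (u t)^2 := by
      have h2 : (∫ t in Ioc a b, (δ:ℝ)^2) ≤ ∫ t in Ioc a b, (u t)^2 := by
        refine setIntegral_mono_on ((integrableOn_const_iff (C := (δ:ℝ)^2)).mpr ?_) (hint.mono_set ?_) measurableSet_Ioc low
        · right; rw [Real.volume_Ioc]; exact ENNReal.ofReal_lt_top
        · intro x hx; exact lt_of_lt_of_le ha0 (le_of_lt hx.1)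
      rw [setIntegral_const, Real.volume_real_Ioc, smul_eq_mul,
        max_eq_left (by linarith : (0:ℝ) ≤ b - a)] at h2
      have hba : b - a = 2 / δ^2 := by rw [hb]; ring
      rw [hba] at h2
      have h9 : 2 / δ^2 * δ^2 = 2 := by field_simp
      linarith
    linarith
  -- u is antitone on [T₀, ∞)
  have hanti : AntitoneOn u (Ici T₀) := by
    refine antitoneOn_of_deriv_nonpos (convex_Ici T₀) (hu.continuous).continuousOn
      (fun x hx => ((hu.differentiable (by simp)) x).differentiableWithinAt) (fun x hx => ?_)
    rw [interior_Ici] at hx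
    exact le_of_lt (hneg x (le_of_lt hx))
  -- (deriv u + u) ≤ 0 on [T₀, ∞)
  have hgr : ∀ t, T₀ ≤ t → deriv u t + u t ≤ 0 := by
    intro t₁ ht₁
    by_contra hcon
    push_neg at hcon
    set h : ℝ → ℝ := fun t => (deriv u t + u t) * exp (-t) with hhdef
    have hhd : ∀ t, T₀ ≤ t → HasDerivAt h ((deriv (deriv u) t - u t) * exp (-t)) t := by
      intro t ht
      have h1 : HasDerivAt (fun t => deriv u t + u t) (deriv (deriv u) t + deriv u t) t :=
        (hudd t).add (hud t)
      have h2 : HasDerivAt (fun t => exp (-t)) (-exp (-t)) t := by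
        exact ((Real.hasDerivAt_exp (-t)).comp t (hasDerivAt_neg t)).congr_deriv (by simp)
      have := h1.mul h2
      exact this.congr_deriv (by ring)
    have hhmono : MonotoneOn h (Ici T₀) := by
      refine monotoneOn_of_deriv_nonneg (convex_Ici T₀) ?_ (fun x hx => ?_) (fun x hx => ?_)
      · exact (((hducont.add hu.continuous).mul (Real.continuous_exp.comp continuous_neg))).continuousOn
      · exact ((hhd x (le_of_lt (by rwa [interior_Ici] at hx))).differentiableAt).differentiableWithinAt
      · rw [interior_Ici] at hx
        rw [(hhd x (le_of_lt hx)).deriv]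
        have := (hddpos x (le_of_lt hx)).2
        have := exp_pos (-x)
        nlinarith
    set ε := h t₁ with hε
    have hεpos : 0 < ε := by
      have := exp_pos (-t₁); simp only [hε, hhdef]; nlinarith
    have hub : 0 < u T₀ := hpos T₀ (le_of_lt hT₀0)
    set t₂ := max t₁ (Real.log (u T₀ / ε) + 1) with ht₂
    have ht₂1 : t₁ ≤ t₂ := le_max_left _ _
    have ht₂T : T₀ ≤ t₂ := le_trans ht₁ ht₂1
    have hh2 : ε ≤ h t₂ := hhmono (mem_Ici.mpr ht₁) (mem_Ici.mpr ht₂T) ht₂1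
    have hexpbig : u T₀ < ε * exp t₂ := by
      have h3 : Real.log (u T₀ / ε) + 1 ≤ t₂ := le_max_right _ _
      have h4 : Real.log (u T₀ / ε) < t₂ := by linarith
      have h5 : u T₀ / ε < exp t₂ := by
        calc u T₀ / ε = exp (Real.log (u T₀ / ε)) := (Real.exp_log (div_pos hub hεpos)).symm
        _ < exp t₂ := Real.exp_lt_exp.mpr h4
      calc u T₀ = (u T₀ / ε) * ε := by field_simp
      _ < exp t₂ * ε := by nlinarith
      _ = ε * exp t₂ := by ring
    have hut₂ : u t₂ ≤ u T₀ := hanti (mem_Ici.mpr le_rfl) (mem_Ici.mpr ht₂T) ht₂T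
    have : 0 < deriv u t₂ := by
      have h6 : (deriv u t₂ + u t₂) * exp (-t₂) ≥ ε := hh2
      have h7 : deriv u t₂ + u t₂ ≥ ε * exp t₂ := by
        have he : exp (-t₂) * exp t₂ = 1 := by rw [← Real.exp_add]; simp
        have := exp_pos t₂
        nlinarith [exp_pos (-t₂)]
      nlinarith
    exact absurd this (not_lt.mpr (le_of_lt (hneg t₂ ht₂T)))
  -- exponential decay of u
  have hexp : ∀ t, T₀ ≤ t → u t ≤ (u T₀ * exp T₀) * exp (-t) := by
    intro t ht
    set k : ℝ → ℝ := fun t => u t * exp t with hkdef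
    have hkd : ∀ s, HasDerivAt k ((deriv u s + u s) * exp s) s := by
      intro s
      have := (hud s).mul (Real.hasDerivAt_exp s)
      exact this.congr_deriv (by ring)
    have hkanti : AntitoneOn k (Ici T₀) := by
      refine antitoneOn_of_deriv_nonpos (convex_Ici T₀)
        ((hu.continuous.mul Real.continuous_exp)).continuousOn
        (fun x hx => ((hkd x).differentiableAt).differentiableWithinAt) (fun x hx => ?_)
      rw [interior_Ici] at hx
      rw [(hkd x).deriv]
      have := hgr x (le_of_lt hx)
      nlinarith [exp_pos x]
    have h1 : k t ≤ k T₀ := hkanti (mem_Ici.mpr le_rfl) (mem_Ici.mpr ht) ht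
    have h2 : u t * exp t ≤ u T₀ * exp T₀ := h1
    have h3 : exp t * exp (-t) = 1 := by rw [← Real.exp_add]; simp
    have h4 := mul_le_mul_of_nonneg_right h2 (le_of_lt (exp_pos (-t)))
    calc u t = u t * exp t * exp (-t) := by rw [mul_assoc, h3, mul_one]
    _ ≤ u T₀ * exp T₀ * exp (-t) := h4
  -- bound on deriv u
  have hderbd : ∀ t, T₀ + 1 ≤ t → -deriv u t ≤ u (t - 1) := by
    intro t ht
    have h1 : t - 1 < t := by linarith
    obtain ⟨c, hc, hceq⟩ := exists_hasDerivAt_eq_slope u (deriv u) h1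
      (hu.continuous).continuousOn (fun x _ => hud x)
    have hcT : T₀ ≤ c := le_trans (by linarith) (le_of_lt hc.1)
    have h2 : deriv u c ≤ deriv u t :=
      le_of_lt (hmono (mem_Ici.mpr hcT) (mem_Ici.mpr (by linarith)) hc.2)
    have h3 : deriv u c = u t - u (t - 1) := by
      rw [hceq]; field_simp; ring
    have h4 : 0 < u t := hpos t (by linarith)
    linarith
  refine ⟨T₀ + 1, u T₀ * exp (T₀ + 1), by linarith, mul_pos (hpos T₀ (le_of_lt hT₀0)) (exp_pos _), fun t ht => ?_⟩
  have htT : T₀ ≤ t := by linarith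
  constructor
  · calc u t ≤ (u T₀ * exp T₀) * exp (-t) := hexp t htT
    _ ≤ u T₀ * exp (T₀ + 1) * exp (-t) := by
        have h1 : exp T₀ ≤ exp (T₀ + 1) := Real.exp_le_exp.mpr (by linarith)
        have h5 := hpos T₀ (le_of_lt hT₀0)
        exact mul_le_mul_of_nonneg_right
          (mul_le_mul_of_nonneg_left h1 (le_of_lt h5)) (le_of_lt (exp_pos (-t)))
  · have h1 : -deriv u t ≤ u (t-1) := hderbd t ht
    have h2 : u (t-1) ≤ (u T₀ * exp T₀) * exp (-(t-1)) := hexp (t-1) (by linarith)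
    have h3 : deriv u t < 0 := hneg t htT
    rw [abs_of_neg h3]
    have h4 : (u T₀ * exp T₀) * exp (-(t-1)) = u T₀ * exp (T₀ + 1) * exp (-t) := by
      rw [mul_assoc, mul_assoc, ← Real.exp_add, ← Real.exp_add]
      ring_nf
    linarith


lemma poly4_le {t : ℝ} (ht : 0 ≤ t) : t^4 * exp (-2*t) ≤ 256 * exp (-t) := by
  have h1 : 1 + t/4 ≤ exp (t/4) := by have := Real.add_one_le_exp (t/4); linarith
  have h2 : (t/4)^4 ≤ exp (t/4) ^ 4 := by
    refine pow_le_pow_left₀ (by positivity) ?_ 4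
    linarith
  have h3 : exp (t/4) ^ 4 = exp t := by
    rw [← Real.exp_nat_mul]; norm_num; ring_nf
  have h4 : t^4 ≤ 256 * exp t := by
    have : (t/4)^4 = t^4/256 := by ring
    rw [this, h3] at h2; linarith
  have h5 : exp t * exp (-2*t) = exp (-t) := by rw [← Real.exp_add]; ring_nf
  calc t^4 * exp (-2*t) ≤ 256 * exp t * exp (-2*t) := by
        nlinarith [exp_pos (-2*t)]
  _ = 256 * exp (-t) := by rw [mul_assoc, h5]

lemma atom_bound (k : ℕ) (hk : k ≤ 4) {s t x y C : ℝ} (ht : 1 ≤ t) (hs : |s| ≤ 2*t)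
    (hx : |x| ≤ C * exp (-t)) (hy : |y| ≤ C * exp (-t)) :
    |s^k * (x * y)| ≤ (16 * C^2) * (t^4 * exp (-2*t)) := by
  have e2 : exp (-t) * exp (-t) = exp (-2*t) := by rw [← Real.exp_add]; ring_nf
  have hC : 0 ≤ C * exp (-t) := le_trans (abs_nonneg x) hx
  have h1 : |s^k * (x*y)| ≤ (2*t)^k * ((C*exp (-t)) * (C*exp (-t))) := by
    rw [abs_mul, abs_mul, abs_pow]
    exact mul_le_mul (pow_le_pow_left₀ (abs_nonneg s) hs k)
      (mul_le_mul hx hy (abs_nonneg y) hC) (by positivity) (by positivity)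
  have h2 : (2*t)^k ≤ 16 * t^4 := by
    calc (2*t)^k ≤ (2*t)^4 := pow_le_pow_right₀ (by linarith) hk
    _ = 16 * t^4 := by ring
  calc |s^k * (x*y)| ≤ (2*t)^k * ((C*exp (-t)) * (C*exp (-t))) := h1
  _ = (2*t)^k * (C^2 * exp (-2*t)) := by
      rw [show (C*exp (-t))*(C*exp (-t)) = C^2*(exp (-t)*exp (-t)) by ring, e2]
  _ ≤ (16 * t^4) * (C^2 * exp (-2*t)) := by
      exact mul_le_mul_of_nonneg_right h2 (by positivity)
  _ = (16 * C^2) * (t^4 * exp (-2*t)) := by ring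


lemma int_and_lim {F : ℝ → ℝ} (hc : Continuous F) (K T : ℝ) (hK : 0 ≤ K) (hT : 0 ≤ T)
    (h : ∀ t, T ≤ t → |F t| ≤ K * (t^4 * exp (-2*t))) :
    IntegrableOn F (Ioi 0) ∧ Tendsto F atTop (𝓝 0) := by
  constructor
  · refine integrableOn_Ioi_of_exp_bound hc T (256*K) (fun t ht => ?_)
    calc |F t| ≤ K * (t^4*exp (-2*t)) := h t ht
    _ ≤ K * (256 * exp (-t)) := by
        exact mul_le_mul_of_nonneg_left (poly4_le (le_trans hT ht)) hK
    _ = 256*K * exp (-t) := by ring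
  · exact tendsto_zero_of_poly4_exp K T h


lemma pbounds {t ξ μ : ℝ} (ht1 : 1 ≤ t) (hs : |t + ξ| ≤ 2*t) (hμ : |μ| ≤ t) :
    |(1:ℝ)| ≤ 16*t^4 ∧ |t+ξ| ≤ 16*t^4 ∧ |(t+ξ)^2| ≤ 16*t^4 ∧
    |(t+ξ)^3| ≤ 16*t^4 ∧ |((t+ξ)^2 - μ)/2| ≤ 16*t^4 ∧ |(-1/2 : ℝ)| ≤ 16*t^4 ∧
    |(t+ξ)^2*((t+ξ)^2-μ)/2| ≤ 16*t^4 ∧ |(-((t+ξ)^2)/2)| ≤ 16*t^4 ∧ |μ| ≤ 16*t^4 ∧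
    |(2:ℝ)| ≤ 16*t^4 := by
  have h0 : (0:ℝ) ≤ t := by linarith
  have ht2 : t ≤ t^2 := by nlinarith
  have ht3 : t^2 ≤ t^3 := by nlinarith
  have ht4 : t^3 ≤ t^4 := by nlinarith
  have ht14 : 1 ≤ t^4 := by nlinarith
  have ht24 : t^2 ≤ t^4 := by linarith
  have hs2 : |t+ξ|^2 ≤ 4*t^2 := by
    calc |t+ξ|^2 ≤ (2*t)^2 := pow_le_pow_left₀ (abs_nonneg _) hs 2
    _ = 4*t^2 := by ring
  have hs3 : |t+ξ|^3 ≤ 8*t^3 := by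
    calc |t+ξ|^3 ≤ (2*t)^3 := pow_le_pow_left₀ (abs_nonneg _) hs 3
    _ = 8*t^3 := by ring
  have hsmu : |(t+ξ)^2 - μ| ≤ 4*t^2 + t := by
    calc |(t+ξ)^2 - μ| ≤ |(t+ξ)^2| + |μ| := abs_sub _ _
    _ ≤ 4*t^2 + t := by rw [abs_pow]; exact add_le_add hs2 hμ
  refine ⟨by rw [abs_one]; linarith, by linarith, ?_, ?_, ?_, ?_, ?_, ?_, by linarith, ?_⟩
  · rw [abs_pow]; linarith
  · rw [abs_pow]; linarith
  · rw [abs_div]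
    have : |((t+ξ)^2 - μ)| / |(2:ℝ)| ≤ (4*t^2+t)/2 := by
      rw [abs_two]; linarith
    linarith
  · rw [abs_div, abs_neg, abs_one, abs_two]; linarith
  · rw [abs_div, abs_mul, abs_two, abs_pow]
    have h1 : |t+ξ|^2 * |(t+ξ)^2 - μ| ≤ (4*t^2) * (4*t^2+t) :=
      mul_le_mul hs2 hsmu (abs_nonneg _) (by positivity)
    have h2 : (4*t^2) * (4*t^2+t) = 16*t^4 + 4*t^3 := by ring
    have h3 : 16*t^4 + 4*t^3 ≤ 32*t^4 := by linarith
    calc |t+ξ|^2 * |(t+ξ)^2 - μ| / 2 ≤ 32*t^4/2 := by linarith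
    _ = 16*t^4 := by ring
  · rw [abs_div, abs_neg, abs_two, abs_pow]; linarith
  · rw [abs_two]; linarith


lemma single_bound {p t x y C : ℝ} (hp : |p| ≤ 16*t^4)
    (hx : |x| ≤ C * exp (-t)) (hy : |y| ≤ C * exp (-t)) :
    |p * (x * y)| ≤ (16 * C^2) * (t^4 * exp (-2*t)) := by
  have e2 : exp (-t) * exp (-t) = exp (-2*t) := by rw [← Real.exp_add]; ring_nf
  have hC : 0 ≤ C * exp (-t) := le_trans (abs_nonneg x) hx
  calc |p * (x*y)| = |p| * |x*y| := abs_mul _ _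
  _ ≤ (16*t^4) * ((C*exp (-t)) * (C*exp (-t))) := by
      refine mul_le_mul hp ?_ (abs_nonneg _) (le_trans (abs_nonneg p) hp)
      rw [abs_mul]
      exact mul_le_mul hx hy (abs_nonneg y) hC
  _ = (16 * C^2) * (t^4 * exp (-2*t)) := by
      rw [show (C*exp (-t))*(C*exp (-t)) = C^2*(exp (-t)*exp (-t)) by ring, e2]; ring

lemma pair_bound {p q t x y z w C : ℝ} (hp : |p| ≤ 16*t^4) (hq : |q| ≤ 16*t^4)
    (hx : |x| ≤ C * exp (-t)) (hy : |y| ≤ C * exp (-t))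
    (hz : |z| ≤ C * exp (-t)) (hw : |w| ≤ C * exp (-t)) :
    |p * (x * y) + q * (z * w)| ≤ (32 * C^2) * (t^4 * exp (-2*t)) := by
  calc |p * (x*y) + q * (z*w)| ≤ |p * (x*y)| + |q * (z*w)| := abs_add_le _ _
  _ ≤ (16 * C^2) * (t^4 * exp (-2*t)) + (16 * C^2) * (t^4 * exp (-2*t)) :=
      add_le_add (single_bound hp hx hy) (single_bound hq hz hw)
  _ = (32 * C^2) * (t^4 * exp (-2*t)) := by ring

lemma core {u : ℝ → ℝ} {μ ξ : ℝ} (hu : ContDiff ℝ (⊤ : ℕ∞) u)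
    (heq : ∀ t, 0 ≤ t → deriv (deriv u) t = ((t + ξ)^2 - μ) * u t)
    (hneum : deriv u 0 = 0)
    (hpos : ∀ t, 0 ≤ t → 0 < u t)
    (hint0 : IntegrableOn (fun t => (u t)^2) (Ioi 0))
    (hnorm : ∫ t in Ioi (0:ℝ), (u t)^2 = 1) :
    IntegrableOn (fun t => (deriv u t)^2) (Ioi 0) ∧
    IntegrableOn (fun t => (t+ξ)*(u t)^2) (Ioi 0) ∧
    IntegrableOn (fun t => (t+ξ)^2*(u t)^2) (Ioi 0) ∧
    IntegrableOn (fun t => (t+ξ)^3*(u t)^2) (Ioi 0) ∧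
    ((∫ t in Ioi (0:ℝ), (deriv u t)^2) + (∫ t in Ioi (0:ℝ), (t+ξ)^2*(u t)^2) = μ) ∧
    ((∫ t in Ioi (0:ℝ), (t+ξ)*(u t)^2) = (μ - ξ^2)*(u 0)^2/2) ∧
    ((∫ t in Ioi (0:ℝ), (t+ξ)*(deriv u t)^2) + (∫ t in Ioi (0:ℝ), (t+ξ)^3*(u t)^2)
       - μ*(∫ t in Ioi (0:ℝ), (t+ξ)*(u t)^2) = (u 0)^2/2) ∧
    (2*(∫ t in Ioi (0:ℝ), (t+ξ)^3*(u t)^2) - μ*(∫ t in Ioi (0:ℝ), (t+ξ)*(u t)^2)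
       - (∫ t in Ioi (0:ℝ), (t+ξ)*(deriv u t)^2) = -(ξ^2*(ξ^2-μ)*(u 0)^2/2)) := by
  have hud : ∀ t, HasDerivAt u (deriv u t) t := fun t => ((hu.differentiable (by simp)) t).hasDerivAt
  have hudd : ∀ t, HasDerivAt (deriv u) (deriv (deriv u) t) t := fun t =>
    (((contDiff_infty_iff_deriv.mp ((contDiff_infty_iff_deriv.mp (hu.of_le (by simp))).2)).1) t).hasDerivAt
  have hcu : Continuous u := hu.continuous
  have hcdu : Continuous (deriv u) := ((contDiff_infty_iff_deriv.mp (hu.of_le (by simp))).2).continuous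
  obtain ⟨T, C, hT1, hC, hdec⟩ := decay hu heq hpos hint0 hnorm
  set T' : ℝ := max T (1 + |ξ| + |μ|) with hT'def
  have hT'0 : (0:ℝ) ≤ T' := le_trans (le_trans (by norm_num : (0:ℝ) ≤ 1) hT1) (le_max_left _ _)
  have hfacts : ∀ t, T' ≤ t → 1 ≤ t ∧ |u t| ≤ C * exp (-t) ∧ |deriv u t| ≤ C * exp (-t) ∧
      |t + ξ| ≤ 2*t ∧ |μ| ≤ t := by
    intro t ht
    have h1 : T ≤ t := le_trans (le_max_left _ _) ht
    have h2 : 1 + |ξ| + |μ| ≤ t := le_trans (le_max_right _ _) ht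
    have hξ1 := abs_nonneg ξ; have hμ1 := abs_nonneg μ
    have ht1 : (1:ℝ) ≤ t := by linarith
    obtain ⟨hb1, hb2⟩ := hdec t h1
    refine ⟨ht1, ?_, hb2, ?_, by linarith⟩
    · rw [abs_of_pos (hpos t (by linarith))]; exact hb1
    · rw [abs_le]
      constructor
      · have := neg_abs_le ξ; linarith
      · have := le_abs_self ξ; linarith
  have hK16 : (0:ℝ) ≤ 16*C^2 := by positivity
  -- integrability of atoms
  have hD0 : IntegrableOn (fun t => (deriv u t)^2) (Ioi 0) := by
    refine (int_and_lim (hcdu.pow 2) (16*C^2) T' hK16 hT'0 (fun t ht => ?_)).1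
    obtain ⟨ht1, hbu, hbd, hbs, hbμ⟩ := hfacts t ht
    have hp := (pbounds ht1 hbs hbμ).1
    have := single_bound hp hbd hbd
    simpa [sq] using this
  have hI1 : IntegrableOn (fun t => (t+ξ)*(u t)^2) (Ioi 0) := by
    refine (int_and_lim ((continuous_id.add continuous_const).mul (hcu.pow 2)) (16*C^2) T' hK16 hT'0 (fun t ht => ?_)).1
    obtain ⟨ht1, hbu, hbd, hbs, hbμ⟩ := hfacts t ht
    have hp := (pbounds ht1 hbs hbμ).2.1
    have := single_bound hp hbu hbu
    simpa [sq] using this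
  have hI2 : IntegrableOn (fun t => (t+ξ)^2*(u t)^2) (Ioi 0) := by
    refine (int_and_lim (((continuous_id.add continuous_const).pow 2).mul (hcu.pow 2)) (16*C^2) T' hK16 hT'0 (fun t ht => ?_)).1
    obtain ⟨ht1, hbu, hbd, hbs, hbμ⟩ := hfacts t ht
    have hp := (pbounds ht1 hbs hbμ).2.2.1
    have := single_bound hp hbu hbu
    simpa [sq] using this
  have hI3 : IntegrableOn (fun t => (t+ξ)^3*(u t)^2) (Ioi 0) := by
    refine (int_and_lim (((continuous_id.add continuous_const).pow 3).mul (hcu.pow 2)) (16*C^2) T' hK16 hT'0 (fun t ht => ?_)).1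
    obtain ⟨ht1, hbu, hbd, hbs, hbμ⟩ := hfacts t ht
    have hp := (pbounds ht1 hbs hbμ).2.2.2.1
    have := single_bound hp hbu hbu
    simpa [sq] using this
  have hD1 : IntegrableOn (fun t => (t+ξ)*(deriv u t)^2) (Ioi 0) := by
    refine (int_and_lim ((continuous_id.add continuous_const).mul (hcdu.pow 2)) (16*C^2) T' hK16 hT'0 (fun t ht => ?_)).1
    obtain ⟨ht1, hbu, hbd, hbs, hbμ⟩ := hfacts t ht
    have hp := (pbounds ht1 hbs hbμ).2.1
    have := single_bound hp hbd hbd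
    simpa [sq] using this
  -- generic derivative pieces
  have hqd : ∀ t : ℝ, HasDerivAt (fun s => (s+ξ)^2 - μ) (2*(t+ξ)) t := by
    intro t
    have h := (((hasDerivAt_id t).add_const ξ).pow 2).sub_const μ
    exact h.congr_deriv (by norm_num [id_eq]; try ring)
  have hsd : ∀ t : ℝ, HasDerivAt (fun s => s+ξ) 1 t := fun t => (hasDerivAt_id t).add_const ξ
  have hu2 : ∀ t : ℝ, HasDerivAt (fun s => (u s)^2) (2*(u t)*(deriv u t)) t := by
    intro t
    have h := (hud t).pow 2
    exact h.congr_deriv (by norm_num [id_eq]; try ring)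
  have hd2 : ∀ t : ℝ, HasDerivAt (fun s => (deriv u s)^2) (2*(deriv u t)*(deriv (deriv u) t)) t := by
    intro t
    have h := (hudd t).pow 2
    exact h.congr_deriv (by norm_num [id_eq]; try ring)
  -- Identity E0
  have idE : (∫ t in Ioi (0:ℝ), ((deriv u t)^2 + ((t+ξ)^2*(u t)^2 - μ*(u t)^2))) = 0 := by
    have hder : ∀ t, 0 ≤ t → HasDerivAt (fun s => u s * deriv u s)
        ((deriv u t)^2 + ((t+ξ)^2*(u t)^2 - μ*(u t)^2)) t := by
      intro t ht
      have h := (hud t).mul (hudd t)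
      rw [heq t ht] at h
      exact h.congr_deriv (by ring)
    have hcont : Continuous (fun t => (deriv u t)^2 + ((t+ξ)^2*(u t)^2 - μ*(u t)^2)) :=
      (hcdu.pow 2).add ((((continuous_id.add continuous_const).pow 2).mul (hcu.pow 2)).sub
        (continuous_const.mul (hcu.pow 2)))
    have hint : IntegrableOn (fun t => (deriv u t)^2 + ((t+ξ)^2*(u t)^2 - μ*(u t)^2)) (Ioi 0) :=
      hD0.add (hI2.sub (hint0.const_mul μ))
    have hlim : Tendsto (fun t => u t * deriv u t) atTop (𝓝 0) := by
      refine tendsto_zero_of_poly4_exp (16*C^2) T' (fun t ht => ?_)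
      obtain ⟨ht1, hbu, hbd, hbs, hbμ⟩ := hfacts t ht
      have := single_bound (pbounds ht1 hbs hbμ).1 hbu hbd
      simpa using this
    have h := integral_Ioi_eq hder hcont hint hlim
    rw [h, hneum]; ring
  have idE' : (∫ t in Ioi (0:ℝ), (deriv u t)^2) + (∫ t in Ioi (0:ℝ), (t+ξ)^2*(u t)^2) = μ := by
    have hsub : IntegrableOn (fun t => (t+ξ)^2*(u t)^2 - μ*(u t)^2) (Ioi 0) :=
      hI2.sub (hint0.const_mul μ)
    have e1 : (∫ t in Ioi (0:ℝ), ((deriv u t)^2 + ((t+ξ)^2*(u t)^2 - μ*(u t)^2)))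
        = (∫ t in Ioi (0:ℝ), (deriv u t)^2)
          + (∫ t in Ioi (0:ℝ), ((t+ξ)^2*(u t)^2 - μ*(u t)^2)) := integral_add hD0 hsub
    have e2 : (∫ t in Ioi (0:ℝ), ((t+ξ)^2*(u t)^2 - μ*(u t)^2))
        = (∫ t in Ioi (0:ℝ), (t+ξ)^2*(u t)^2) - (∫ t in Ioi (0:ℝ), μ*(u t)^2) :=
      integral_sub hI2 (hint0.const_mul μ)
    have e3 : (∫ t in Ioi (0:ℝ), μ*(u t)^2) = μ * ∫ t in Ioi (0:ℝ), (u t)^2 :=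
      integral_const_mul μ _
    rw [hnorm] at e3
    linarith
  -- Identity A
  have idA : (∫ t in Ioi (0:ℝ), (t+ξ)*(u t)^2) = (μ - ξ^2)*(u 0)^2/2 := by
    have hder : ∀ t, 0 ≤ t → HasDerivAt
        (fun s => (((s+ξ)^2 - μ)*(u s)^2 - (deriv u s)^2)/2) ((t+ξ)*(u t)^2) t := by
      intro t ht
      have h := (((hqd t).mul (hu2 t)).sub (hd2 t)).div_const 2
      rw [heq t ht] at h
      exact h.congr_deriv (by ring)
    have hcont : Continuous (fun t : ℝ => (t+ξ)*(u t)^2) :=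
      (continuous_id.add continuous_const).mul (hcu.pow 2)
    have hlim : Tendsto (fun t => (((t+ξ)^2 - μ)*(u t)^2 - (deriv u t)^2)/2) atTop (𝓝 0) := by
      refine tendsto_zero_of_poly4_exp (32*C^2) T' (fun t ht => ?_)
      obtain ⟨ht1, hbu, hbd, hbs, hbμ⟩ := hfacts t ht
      have hpb := pbounds ht1 hbs hbμ
      have := pair_bound hpb.2.2.2.2.1 hpb.2.2.2.2.2.1 hbu hbu hbd hbd
      have heqn : (((t+ξ)^2 - μ)*(u t)^2 - (deriv u t)^2)/2
          = ((t+ξ)^2 - μ)/2*(u t * u t) + (-1/2)*(deriv u t * deriv u t) := by ring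
      rw [heqn]
      exact this
    have h := integral_Ioi_eq hder hcont hI1 hlim
    rw [h, hneum]; ring
  -- Identity I1
  have idI : (∫ t in Ioi (0:ℝ), (t+ξ)*(deriv u t)^2) + (∫ t in Ioi (0:ℝ), (t+ξ)^3*(u t)^2)
      - μ*(∫ t in Ioi (0:ℝ), (t+ξ)*(u t)^2) = (u 0)^2/2 := by
    have hder : ∀ t, 0 ≤ t → HasDerivAt
        (fun s => (s+ξ)*(u s * deriv u s) - (u s)^2/2)
        ((t+ξ)*(deriv u t)^2 + ((t+ξ)^3*(u t)^2 - μ*((t+ξ)*(u t)^2))) t := by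
      intro t ht
      have h := ((hsd t).mul ((hud t).mul (hudd t))).sub ((hu2 t).div_const 2)
      rw [heq t ht] at h
      exact h.congr_deriv (by simp only [Pi.mul_apply, Pi.sub_apply]; ring)
    have hcont : Continuous (fun t => (t+ξ)*(deriv u t)^2 + ((t+ξ)^3*(u t)^2 - μ*((t+ξ)*(u t)^2))) :=
      ((continuous_id.add continuous_const).mul (hcdu.pow 2)).add
        ((((continuous_id.add continuous_const).pow 3).mul (hcu.pow 2)).sub
          (continuous_const.mul ((continuous_id.add continuous_const).mul (hcu.pow 2))))
    have hint : IntegrableOn (fun t => (t+ξ)*(deriv u t)^2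
        + ((t+ξ)^3*(u t)^2 - μ*((t+ξ)*(u t)^2))) (Ioi 0) :=
      hD1.add (hI3.sub (hI1.const_mul μ))
    have hlim : Tendsto (fun t => (t+ξ)*(u t * deriv u t) - (u t)^2/2) atTop (𝓝 0) := by
      refine tendsto_zero_of_poly4_exp (32*C^2) T' (fun t ht => ?_)
      obtain ⟨ht1, hbu, hbd, hbs, hbμ⟩ := hfacts t ht
      have hpb := pbounds ht1 hbs hbμ
      have := pair_bound hpb.2.1 hpb.2.2.2.2.2.1 hbu hbd hbu hbu
      have heqn : (t+ξ)*(u t * deriv u t) - (u t)^2/2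
          = (t+ξ)*(u t * deriv u t) + (-1/2)*(u t * u t) := by ring
      rw [heqn]
      exact this
    have h := integral_Ioi_eq hder hcont hint hlim
    have hG0 : 0 - ((0+ξ)*(u 0 * deriv u 0) - (u 0)^2/2) = (u 0)^2/2 := by
      rw [hneum]; ring
    rw [hG0] at h
    have hsub : IntegrableOn (fun t => (t+ξ)^3*(u t)^2 - μ*((t+ξ)*(u t)^2)) (Ioi 0) :=
      hI3.sub (hI1.const_mul μ)
    have e1 : (∫ t in Ioi (0:ℝ), ((t+ξ)*(deriv u t)^2 + ((t+ξ)^3*(u t)^2 - μ*((t+ξ)*(u t)^2))))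
        = (∫ t in Ioi (0:ℝ), (t+ξ)*(deriv u t)^2)
          + (∫ t in Ioi (0:ℝ), ((t+ξ)^3*(u t)^2 - μ*((t+ξ)*(u t)^2))) := integral_add hD1 hsub
    have e2 : (∫ t in Ioi (0:ℝ), ((t+ξ)^3*(u t)^2 - μ*((t+ξ)*(u t)^2)))
        = (∫ t in Ioi (0:ℝ), (t+ξ)^3*(u t)^2) - (∫ t in Ioi (0:ℝ), μ*((t+ξ)*(u t)^2)) :=
      integral_sub hI3 (hI1.const_mul μ)
    have e3 : (∫ t in Ioi (0:ℝ), μ*((t+ξ)*(u t)^2)) = μ * ∫ t in Ioi (0:ℝ), (t+ξ)*(u t)^2 :=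
      integral_const_mul μ _
    linarith
  -- Identity J2
  have idJ : 2*(∫ t in Ioi (0:ℝ), (t+ξ)^3*(u t)^2) - μ*(∫ t in Ioi (0:ℝ), (t+ξ)*(u t)^2)
      - (∫ t in Ioi (0:ℝ), (t+ξ)*(deriv u t)^2) = -(ξ^2*(ξ^2-μ)*(u 0)^2/2) := by
    have hq2 : ∀ t : ℝ, HasDerivAt (fun s : ℝ => (s+ξ)^2) (2*(t+ξ)) t := by
      intro t
      have h := ((hasDerivAt_id t).add_const ξ).pow 2
      exact h.congr_deriv (by norm_num [id_eq]; try ring)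
    have hder : ∀ t, 0 ≤ t → HasDerivAt
        (fun s => ((s+ξ)^2*(((s+ξ)^2 - μ)*(u s)^2 - (deriv u s)^2))/2)
        (2*((t+ξ)^3*(u t)^2) - μ*((t+ξ)*(u t)^2) - (t+ξ)*(deriv u t)^2) t := by
      intro t ht
      have h := ((hq2 t).mul (((hqd t).mul (hu2 t)).sub (hd2 t))).div_const 2
      rw [heq t ht] at h
      exact h.congr_deriv (by simp only [Pi.mul_apply, Pi.sub_apply]; ring)
    have hcont : Continuous (fun t => 2*((t+ξ)^3*(u t)^2) - μ*((t+ξ)*(u t)^2)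
        - (t+ξ)*(deriv u t)^2) :=
      ((continuous_const.mul (((continuous_id.add continuous_const).pow 3).mul (hcu.pow 2))).sub
        (continuous_const.mul ((continuous_id.add continuous_const).mul (hcu.pow 2)))).sub
        ((continuous_id.add continuous_const).mul (hcdu.pow 2))
    have hint : IntegrableOn (fun t => 2*((t+ξ)^3*(u t)^2) - μ*((t+ξ)*(u t)^2)
        - (t+ξ)*(deriv u t)^2) (Ioi 0) :=
      ((hI3.const_mul 2).sub (hI1.const_mul μ)).sub hD1
    have hlim : Tendsto (fun t => ((t+ξ)^2*(((t+ξ)^2 - μ)*(u t)^2 - (deriv u t)^2))/2)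
        atTop (𝓝 0) := by
      refine tendsto_zero_of_poly4_exp (32*C^2) T' (fun t ht => ?_)
      obtain ⟨ht1, hbu, hbd, hbs, hbμ⟩ := hfacts t ht
      have hpb := pbounds ht1 hbs hbμ
      have := pair_bound hpb.2.2.2.2.2.2.1 hpb.2.2.2.2.2.2.2.1 hbu hbu hbd hbd
      have heqn : ((t+ξ)^2*(((t+ξ)^2 - μ)*(u t)^2 - (deriv u t)^2))/2
          = (t+ξ)^2*((t+ξ)^2-μ)/2*(u t * u t) + (-((t+ξ)^2)/2)*(deriv u t * deriv u t) := by
        ring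
      rw [heqn]
      exact this
    have h := integral_Ioi_eq hder hcont hint hlim
    have hG0 : 0 - ((0+ξ)^2*(((0+ξ)^2 - μ)*(u 0)^2 - (deriv u 0)^2))/2
        = -(ξ^2*(ξ^2-μ)*(u 0)^2/2) := by
      rw [hneum]; ring
    rw [hG0] at h
    have hsub : IntegrableOn (fun t => 2*((t+ξ)^3*(u t)^2) - μ*((t+ξ)*(u t)^2)) (Ioi 0) :=
      (hI3.const_mul 2).sub (hI1.const_mul μ)
    have e1 : (∫ t in Ioi (0:ℝ), (2*((t+ξ)^3*(u t)^2) - μ*((t+ξ)*(u t)^2) - (t+ξ)*(deriv u t)^2))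
        = (∫ t in Ioi (0:ℝ), (2*((t+ξ)^3*(u t)^2) - μ*((t+ξ)*(u t)^2)))
          - (∫ t in Ioi (0:ℝ), (t+ξ)*(deriv u t)^2) := integral_sub hsub hD1
    have e2 : (∫ t in Ioi (0:ℝ), (2*((t+ξ)^3*(u t)^2) - μ*((t+ξ)*(u t)^2)))
        = (∫ t in Ioi (0:ℝ), 2*((t+ξ)^3*(u t)^2)) - (∫ t in Ioi (0:ℝ), μ*((t+ξ)*(u t)^2)) :=
      integral_sub (hI3.const_mul 2) (hI1.const_mul μ)
    have e3 : (∫ t in Ioi (0:ℝ), μ*((t+ξ)*(u t)^2)) = μ * ∫ t in Ioi (0:ℝ), (t+ξ)*(u t)^2 :=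
      integral_const_mul μ _
    have e4 : (∫ t in Ioi (0:ℝ), 2*((t+ξ)^3*(u t)^2)) = 2 * ∫ t in Ioi (0:ℝ), (t+ξ)^3*(u t)^2 :=
      integral_const_mul 2 _
    linarith
  exact ⟨hD0, hI1, hI2, hI3, idE', idA, idI, idJ⟩


lemma variational {v w : ℝ → ℝ} {ν η : ℝ}
    (hv : ContDiff ℝ (⊤ : ℕ∞) v)
    (hvpos : ∀ t, 0 ≤ t → 0 < v t)
    (hw : ContDiff ℝ (⊤ : ℕ∞) w)
    (hweq : ∀ t, 0 ≤ t → deriv (deriv w) t = ((t + η)^2 - ν) * w t)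
    (hwneum : deriv w 0 = 0)
    (hwpos : ∀ t, 0 ≤ t → 0 < w t)
    (hvnorm : ∫ t in Ioi (0:ℝ), (v t)^2 = 1)
    (hvint : IntegrableOn (fun t => (v t)^2) (Ioi 0))
    (hQint : IntegrableOn (fun t => (deriv v t)^2 + (t+η)^2*(v t)^2) (Ioi 0))
    (T C : ℝ) (hT1 : 1 ≤ T) (hC : 0 < C)
    (hdec : ∀ t, T ≤ t → v t ≤ C * exp (-t) ∧ |deriv v t| ≤ C * exp (-t)) :
    ν ≤ ∫ t in Ioi (0:ℝ), ((deriv v t)^2 + (t+η)^2*(v t)^2) := by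
  set Q := ∫ t in Ioi (0:ℝ), ((deriv v t)^2 + (t+η)^2*(v t)^2) with hQdef
  have hvd : ∀ t, HasDerivAt v (deriv v t) t := fun t => ((hv.differentiable (by simp)) t).hasDerivAt
  have hcv : Continuous v := hv.continuous
  have hcdv : Continuous (deriv v) := ((contDiff_infty_iff_deriv.mp (hv.of_le (by simp))).2).continuous
  have hwd : ∀ t, HasDerivAt w (deriv w t) t := fun t => ((hw.differentiable (by simp)) t).hasDerivAt
  have hwdd : ∀ t, HasDerivAt (deriv w) (deriv (deriv w) t) t := fun t =>
    (((contDiff_infty_iff_deriv.mp ((contDiff_infty_iff_deriv.mp (hw.of_le (by simp))).2)).1) t).hasDerivAt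
  have hcw : Continuous w := hw.continuous
  have hcdw : Continuous (deriv w) := ((contDiff_infty_iff_deriv.mp (hw.of_le (by simp))).2).continuous
  -- the cutoff function
  set φ : ℝ → ℝ := fun x => Real.smoothTransition (2 - x) with hφdef
  have hφcd : ContDiff ℝ (↑(⊤:ℕ∞)) φ :=
    Real.smoothTransition.contDiff.comp (contDiff_const.sub contDiff_id)
  have hφcont : Continuous φ := hφcd.continuous
  have hφd : ∀ x, HasDerivAt φ (deriv φ x) x := fun x =>
    (((contDiff_infty_iff_deriv.mp hφcd).1) x).hasDerivAt
  have hφdc : Continuous (deriv φ) := ((contDiff_infty_iff_deriv.mp hφcd).2).continuous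
  have hφ1 : ∀ x : ℝ, x ≤ 1 → φ x = 1 := fun x hx =>
    Real.smoothTransition.one_of_one_le (by linarith)
  have hφ0 : ∀ x : ℝ, 2 ≤ x → φ x = 0 := fun x hx =>
    Real.smoothTransition.zero_of_nonpos (by linarith)
  have hφnn : ∀ x, 0 ≤ φ x := fun x => Real.smoothTransition.nonneg _
  have hφle : ∀ x, φ x ≤ 1 := fun x => Real.smoothTransition.le_one _
  -- derivative of φ vanishes outside [1,2]
  have hφd0 : ∀ x, x ∉ Icc (1:ℝ) 2 → deriv φ x = 0 := by
    intro x hx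
    rw [mem_Icc, not_and_or] at hx
    rcases hx with hx | hx
    · push_neg at hx
      have hev : φ =ᶠ[𝓝 x] (fun _ => 1) := by
        filter_upwards [Iio_mem_nhds hx] with y hy
        exact hφ1 y (le_of_lt hy)
      rw [hev.deriv_eq, deriv_const]
    · push_neg at hx
      have hev : φ =ᶠ[𝓝 x] (fun _ => 0) := by
        filter_upwards [Ioi_mem_nhds hx] with y hy
        exact hφ0 y (le_of_lt hy)
      rw [hev.deriv_eq, deriv_const]
  obtain ⟨M₀, hM₀⟩ := (HasCompactSupport.intro isCompact_Icc hφd0).exists_bound_of_continuous hφdc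
  set M := max M₀ 1 with hMdef
  have hM1 : (1:ℝ) ≤ M := le_max_right _ _
  have hM0 : (0:ℝ) < M := by linarith
  have hMb : ∀ x, |deriv φ x| ≤ M := fun x =>
    le_trans (by simpa using hM₀ x) (le_max_left _ _)
  -- the main inequality for fixed X
  have main : ∀ X : ℝ, max T 1 ≤ X →
      ν * (∫ t in (0:ℝ)..(2*X), (φ (t/X) * v t)^2)
        ≤ Q + 2*X*((M^2 + 2*M)*C^2*exp (-2*X)) := by
    intro X hX
    have hXT : T ≤ X := le_trans (le_max_left _ _) hX
    have hX1 : (1:ℝ) ≤ X := le_trans (le_max_right _ _) hX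
    have hX0 : (0:ℝ) < X := by linarith
    have hY0 : (0:ℝ) ≤ 2*X := by linarith
    set g : ℝ → ℝ := fun t => φ (t/X) * v t with hgdef
    set Dg : ℝ → ℝ := fun t => deriv φ (t/X) / X * v t + φ (t/X) * deriv v t with hDgdef
    have hcdiv : ∀ t : ℝ, HasDerivAt (fun s : ℝ => s / X) (1/X) t := by
      intro t
      simpa using (hasDerivAt_id t).div_const X
    have hgd : ∀ t, HasDerivAt g (Dg t) t := by
      intro t
      have h1 : HasDerivAt (fun s => φ (s/X)) (deriv φ (t/X) * (1/X)) t :=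
        by have := (hφd (t/X)).comp t (hcdiv t); exact this
      have h2 := h1.mul (hvd t)
      exact h2.congr_deriv (by simp only [hDgdef]; ring)
    have hDgcont : Continuous Dg :=
      (((hφdc.comp (continuous_id.div_const X)).div_const X).mul hcv).add
        ((hφcont.comp (continuous_id.div_const X)).mul hcdv)
    have hgcont : Continuous g := (hφcont.comp (continuous_id.div_const X)).mul hcv
    -- ground state representation on [0, 2X]
    have hKI : ν * (∫ t in (0:ℝ)..(2*X), (g t)^2)
        ≤ ∫ t in (0:ℝ)..(2*X), ((Dg t)^2 + (t+η)^2*(g t)^2) := by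
      set r : ℝ → ℝ := fun t => deriv w t / w t with hrdef
      have hrcont : ContinuousOn r (Icc 0 (2*X)) :=
        hcdw.continuousOn.div hcw.continuousOn (fun x hx => ne_of_gt (hwpos x hx.1))
      have hFder : ∀ t ∈ uIcc (0:ℝ) (2*X), HasDerivAt (fun s => r s * (g s)^2)
          ((Dg t)^2 + ((t+η)^2 - ν)*(g t)^2 - (Dg t - r t * g t)^2) t := by
        intro t ht
        rw [uIcc_of_le hY0] at ht
        have ht0 : 0 ≤ t := ht.1
        have hwne : w t ≠ 0 := ne_of_gt (hwpos t ht0)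
        have hr : HasDerivAt r ((deriv (deriv w) t * w t - deriv w t * deriv w t)/(w t)^2) t :=
          (hwdd t).div (hwd t) hwne
        have hg2 : HasDerivAt (fun s => (g s)^2) (2 * g t * Dg t) t := by
          have := (hgd t).pow 2
          exact this.congr_deriv (by norm_num [id_eq]; try ring)
        have h := hr.mul hg2
        refine h.congr_deriv ?_
        rw [hweq t ht0]
        simp only [hrdef]
        field_simp
        ring
      have hrcont' : ContinuousOn (fun t => (Dg t)^2 + ((t+η)^2 - ν)*(g t)^2
          - (Dg t - r t * g t)^2) (uIcc (0:ℝ) (2*X)) := by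
        rw [uIcc_of_le hY0]
        refine ContinuousOn.sub (Continuous.continuousOn (by fun_prop)) ?_
        exact ((hDgcont.continuousOn.sub (hrcont.mul hgcont.continuousOn)).pow 2)
      have hFTC := intervalIntegral.integral_eq_sub_of_hasDerivAt hFder hrcont'.intervalIntegrable
      have hg2X : g (2*X) = 0 := by
        simp only [hgdef]
        rw [show 2*X/X = 2 by field_simp, hφ0 2 le_rfl, zero_mul]
      have hr0 : r 0 = 0 := by simp only [hrdef]; rw [hwneum, zero_div]
      rw [hg2X, hr0] at hFTC
      simp at hFTC
      -- hFTC : ∫ (Dg² + ((t+η)²-ν) g² - (Dg - r g)²) = 0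
      have hi1 : IntervalIntegrable (fun t => (Dg t)^2 + ((t+η)^2 - ν)*(g t)^2) volume 0 (2*X) :=
        (Continuous.continuousOn (by fun_prop)).intervalIntegrable
      have hi2 : IntervalIntegrable (fun t => (Dg t - r t * g t)^2) volume 0 (2*X) := by
        refine ContinuousOn.intervalIntegrable ?_
        rw [uIcc_of_le hY0]
        exact ((hDgcont.continuousOn.sub (hrcont.mul hgcont.continuousOn)).pow 2)
      have hsplit : (∫ t in (0:ℝ)..(2*X), ((Dg t)^2 + ((t+η)^2 - ν)*(g t)^2
            - (Dg t - r t * g t)^2))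
          = (∫ t in (0:ℝ)..(2*X), ((Dg t)^2 + ((t+η)^2 - ν)*(g t)^2))
            - ∫ t in (0:ℝ)..(2*X), (Dg t - r t * g t)^2 :=
        intervalIntegral.integral_sub hi1 hi2
      have hnn : 0 ≤ ∫ t in (0:ℝ)..(2*X), (Dg t - r t * g t)^2 :=
        intervalIntegral.integral_nonneg hY0 (fun t _ => sq_nonneg _)
      have hkey : 0 ≤ ∫ t in (0:ℝ)..(2*X), ((Dg t)^2 + ((t+η)^2 - ν)*(g t)^2) := by
        rw [hFTC] at hsplit  -- wrong direction? handle below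
        linarith [hsplit.symm]
      -- split off the ν term
      have hi3 : IntervalIntegrable (fun t => (Dg t)^2 + (t+η)^2*(g t)^2) volume 0 (2*X) :=
        (Continuous.continuousOn (by fun_prop)).intervalIntegrable
      have hi4 : IntervalIntegrable (fun t => ν*(g t)^2) volume 0 (2*X) :=
        (Continuous.continuousOn (by fun_prop)).intervalIntegrable
      have hsplit2 : (∫ t in (0:ℝ)..(2*X), ((Dg t)^2 + ((t+η)^2 - ν)*(g t)^2))
          = (∫ t in (0:ℝ)..(2*X), ((Dg t)^2 + (t+η)^2*(g t)^2))
            - ∫ t in (0:ℝ)..(2*X), ν*(g t)^2 := by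
        rw [← intervalIntegral.integral_sub hi3 hi4]
        apply intervalIntegral.integral_congr
        intro t _
        ring
      have hν : (∫ t in (0:ℝ)..(2*X), ν*(g t)^2) = ν * ∫ t in (0:ℝ)..(2*X), (g t)^2 :=
        intervalIntegral.integral_const_mul ν _
      linarith [hkey, hsplit2, hν]
    -- bound the right-hand side
    have hRHS : (∫ t in (0:ℝ)..(2*X), ((Dg t)^2 + (t+η)^2*(g t)^2))
        ≤ Q + 2*X*((M^2 + 2*M)*C^2*exp (-2*X)) := by
      set e : ℝ → ℝ := fun t => (deriv φ (t/X)/X)^2*(v t)^2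
        + 2*(φ (t/X))*(deriv φ (t/X)/X)*(v t)*(deriv v t) with hedef
      have hsplit : (∫ t in (0:ℝ)..(2*X), ((Dg t)^2 + (t+η)^2*(g t)^2))
          = (∫ t in (0:ℝ)..(2*X), (φ (t/X))^2*((deriv v t)^2 + (t+η)^2*(v t)^2))
            + ∫ t in (0:ℝ)..(2*X), e t := by
        rw [← intervalIntegral.integral_add ((Continuous.continuousOn (by fun_prop)).intervalIntegrable)
          ((Continuous.continuousOn (by fun_prop)).intervalIntegrable)]
        apply intervalIntegral.integral_congr
        intro t _
        simp only [hgdef, hDgdef, hedef]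
        ring
      have hterm1 : (∫ t in (0:ℝ)..(2*X), (φ (t/X))^2*((deriv v t)^2 + (t+η)^2*(v t)^2)) ≤ Q := by
        have h1 : (∫ t in (0:ℝ)..(2*X), (φ (t/X))^2*((deriv v t)^2 + (t+η)^2*(v t)^2))
            ≤ ∫ t in (0:ℝ)..(2*X), ((deriv v t)^2 + (t+η)^2*(v t)^2) := by
          refine intervalIntegral.integral_mono_on hY0
            ((Continuous.continuousOn (by fun_prop)).intervalIntegrable)
            ((Continuous.continuousOn (by fun_prop)).intervalIntegrable) (fun t _ => ?_)
          have h2 : (φ (t/X))^2 ≤ 1 := by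
            have := hφnn (t/X); have := hφle (t/X); nlinarith
          have h3 : 0 ≤ (deriv v t)^2 + (t+η)^2*(v t)^2 := by positivity
          nlinarith
        have h4 : (∫ t in (0:ℝ)..(2*X), ((deriv v t)^2 + (t+η)^2*(v t)^2)) ≤ Q := by
          rw [intervalIntegral.integral_of_le hY0, hQdef]
          refine setIntegral_mono_set hQint ?_ ?_
          · filter_upwards with t using by positivity
          · exact HasSubset.Subset.eventuallyLE (fun x hx => hx.1)
        linarith
      have hterm2 : (∫ t in (0:ℝ)..(2*X), e t) ≤ 2*X*((M^2 + 2*M)*C^2*exp (-2*X)) := by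
        have hbd : ∀ t ∈ Set.uIoc (0:ℝ) (2*X), ‖e t‖ ≤ (M^2 + 2*M)*C^2*exp (-2*X) := by
          intro t ht
          rw [uIoc_of_le hY0] at ht
          have hE2 : exp (-X) * exp (-X) = exp (-2*X) := by rw [← Real.exp_add]; ring_nf
          rcases lt_or_ge t X with h | h
          · have hd0 : deriv φ (t/X) = 0 := by
              apply hφd0
              rw [mem_Icc, not_and_or]
              left
              push_neg
              exact (div_lt_one hX0).mpr h
            have he0 : e t = 0 := by
              simp only [hedef, hd0]
              ring
            rw [he0, norm_zero]
            positivity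
          · have htT : T ≤ t := le_trans hXT h
            obtain ⟨hv1, hd1⟩ := hdec t htT
            have hexpm : exp (-t) ≤ exp (-X) := Real.exp_le_exp.mpr (by linarith)
            have hvt0 : 0 < v t := hvpos t (by linarith)
            have hbv : |v t| ≤ C * exp (-X) := by
              rw [abs_of_pos hvt0]
              calc v t ≤ C * exp (-t) := hv1
              _ ≤ C * exp (-X) := by nlinarith
            have hbdv : |deriv v t| ≤ C * exp (-X) := by
              calc |deriv v t| ≤ C * exp (-t) := hd1
              _ ≤ C * exp (-X) := by nlinarith
            have hba : |deriv φ (t/X)/X| ≤ M := by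
              rw [abs_div, abs_of_pos hX0]
              calc |deriv φ (t/X)|/X ≤ M/X := (div_le_div_iff_of_pos_right hX0).mpr (hMb _)
              _ ≤ M := div_le_self (le_of_lt hM0) hX1
            have hbφ0 : 0 ≤ φ (t/X) := hφnn _
            have hbφ1 : φ (t/X) ≤ 1 := hφle _
            set a := deriv φ (t/X)/X
            set b := φ (t/X)
            set E := C * exp (-X) with hEdef
            have hE0 : 0 ≤ E := by positivity
            have h1 : |a^2*(v t)^2| ≤ M^2*E^2 := by
              rw [abs_mul, abs_pow, abs_pow]
              have ha2 := pow_le_pow_left₀ (abs_nonneg a) hba 2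
              have hv2 := pow_le_pow_left₀ (abs_nonneg (v t)) hbv 2
              exact mul_le_mul ha2 hv2 (by positivity) (by positivity)
            have h2 : |2*b*a*(v t)*(deriv v t)| ≤ 2*(M*(E*E)) := by
              have heq2 : |2*b*a*(v t)*(deriv v t)| = 2*(b*(|a| * (|v t| * |deriv v t|))) := by
                rw [abs_mul, abs_mul, abs_mul, abs_mul, abs_two, abs_of_nonneg hbφ0]
                ring
              rw [heq2]
              have hstep : b*(|a| * (|v t| * |deriv v t|)) ≤ 1*(M*(E*E)) := by
                refine mul_le_mul hbφ1 ?_ (by positivity) (by norm_num)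
                refine mul_le_mul hba ?_ (by positivity) (le_trans (abs_nonneg a) hba)
                exact mul_le_mul hbv hbdv (abs_nonneg _) hE0
              linarith
            have hEsq : E^2 = C^2*exp (-2*X) := by
              rw [hEdef]
              calc (C*exp (-X))^2 = C^2*(exp (-X)*exp (-X)) := by ring
              _ = C^2*exp (-2*X) := by rw [hE2]
            have hfin : ‖e t‖ ≤ M^2*E^2 + 2*(M*(E*E)) := by
              rw [Real.norm_eq_abs]
              calc |e t| = |a^2*(v t)^2 + 2*b*a*(v t)*(deriv v t)| := by
                    simp only [hedef]; rfl
              _ ≤ |a^2*(v t)^2| + |2*b*a*(v t)*(deriv v t)| := abs_add_le _ _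
              _ ≤ M^2*E^2 + 2*(M*(E*E)) := add_le_add h1 h2
            have hEE : E*E = E^2 := by ring
            rw [hEE, hEsq] at hfin
            calc ‖e t‖ ≤ M^2*(C^2*exp (-2*X)) + 2*(M*(C^2*exp (-2*X))) := hfin
            _ = (M^2 + 2*M)*C^2*exp (-2*X) := by ring
        have hni := intervalIntegral.norm_integral_le_of_norm_le_const hbd
        have h2X : |2*X - 0| = 2*X := by rw [sub_zero]; exact abs_of_nonneg hY0
        rw [h2X] at hni
        calc (∫ t in (0:ℝ)..(2*X), e t) ≤ |∫ t in (0:ℝ)..(2*X), e t| := le_abs_self _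
        _ ≤ (M^2 + 2*M)*C^2*exp (-2*X) * (2*X) := by rw [← Real.norm_eq_abs]; exact hni
        _ = 2*X*((M^2 + 2*M)*C^2*exp (-2*X)) := by ring
      linarith
    linarith [hKI, hRHS]
  -- pass to the limit X → ∞
  set err : ℝ → ℝ := fun X => 2*X*((M^2 + 2*M)*C^2*exp (-2*X)) with herrdef
  have herr : Tendsto err atTop (𝓝 0) := by
    refine tendsto_zero_of_poly4_exp (2*((M^2 + 2*M)*C^2)) 1 (fun X hX1 => ?_)
    have hX0 : (0:ℝ) < X := by linarith
    have hX4 : X ≤ X^4 := by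
      have := pow_le_pow_right₀ (by linarith : (1:ℝ) ≤ X) (by norm_num : 1 ≤ 4)
      simpa using this
    have hK0 : (0:ℝ) ≤ (M^2 + 2*M)*C^2 := by positivity
    rw [herrdef]
    simp only
    rw [abs_of_nonneg (by positivity)]
    have h5 : X*exp (-2*X) ≤ X^4*exp (-2*X) :=
      mul_le_mul_of_nonneg_right hX4 (le_of_lt (exp_pos _))
    nlinarith [mul_le_mul_of_nonneg_left h5 (by positivity : (0:ℝ) ≤ 2*((M^2 + 2*M)*C^2))]
  have h2X : Tendsto (fun X : ℝ => 2*X) atTop atTop := by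
    exact (tendsto_id.const_mul_atTop two_pos)
  have hg1 : Tendsto (fun X => ∫ t in (0:ℝ)..X, (v t)^2) atTop (𝓝 1) := by
    rw [← hvnorm]
    exact intervalIntegral_tendsto_integral_Ioi 0 hvint tendsto_id
  have hg2 : Tendsto (fun X => ∫ t in (0:ℝ)..(2*X), (v t)^2) atTop (𝓝 1) := by
    rw [← hvnorm]
    exact intervalIntegral_tendsto_integral_Ioi 0 hvint h2X
  have haX : Tendsto (fun X => ∫ t in (0:ℝ)..(2*X), (φ (t/X) * v t)^2) atTop (𝓝 1) := by
    refine tendsto_of_tendsto_of_tendsto_of_le_of_le' hg1 hg2 ?_ ?_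
    · filter_upwards [eventually_ge_atTop (max T 1)] with X hX
      have hX1 : (1:ℝ) ≤ X := le_trans (le_max_right _ _) hX
      have hX0 : (0:ℝ) < X := by linarith
      have he1 : (∫ t in (0:ℝ)..X, (v t)^2) = ∫ t in (0:ℝ)..X, (φ (t/X) * v t)^2 := by
        refine intervalIntegral.integral_congr (fun t ht => ?_)
        rw [uIcc_of_le (by linarith : (0:ℝ) ≤ X)] at ht
        have : φ (t/X) = 1 := hφ1 _ ((div_le_one hX0).mpr ht.2)
        rw [this, one_mul]
      rw [he1]
      refine intervalIntegral.integral_mono_interval le_rfl (by linarith) (by linarith) ?_ ?_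
      · filter_upwards with t using sq_nonneg _
      · exact (Continuous.continuousOn
          (((hφcont.comp (continuous_id.div_const X)).mul hcv).pow 2)).intervalIntegrable
    · filter_upwards [eventually_ge_atTop (max T 1)] with X hX
      have hX1 : (1:ℝ) ≤ X := le_trans (le_max_right _ _) hX
      have hX0 : (0:ℝ) < X := by linarith
      refine intervalIntegral.integral_mono_on (by linarith)
        ((Continuous.continuousOn
          (((hφcont.comp (continuous_id.div_const X)).mul hcv).pow 2)).intervalIntegrable)
        ((Continuous.continuousOn (hcv.pow 2)).intervalIntegrable) (fun t _ => ?_)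
      have h1 := hφnn (t/X); have h2 := hφle (t/X)
      have : (φ (t/X) * v t)^2 = (φ (t/X))^2 * (v t)^2 := by ring
      rw [this]
      have h3 : (φ (t/X))^2 ≤ 1 := by nlinarith
      nlinarith [mul_le_mul_of_nonneg_right h3 (sq_nonneg (v t))]
  have hL : Tendsto (fun X => ν * (∫ t in (0:ℝ)..(2*X), (φ (t/X) * v t)^2)) atTop (𝓝 ν) := by
    have := haX.const_mul ν
    simpa using this
  have hR : Tendsto (fun X => Q + err X) atTop (𝓝 Q) := by
    have h := (tendsto_const_nhds : Tendsto (fun _ : ℝ => Q) atTop (𝓝 Q)).add herr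
    simpa using h
  refine le_of_tendsto_of_tendsto hL hR ?_
  filter_upwards [eventually_ge_atTop (max T 1)] with X hX
  exact main X hX

end DeGennesAux

open DeGennesAux Real


/-- For the de Gennes operator:
`Θ₀ = ξ₀²` with `ξ₀ < 0`, and `C₁/2 - Θ₀ξ₀ = M₃ - ξ₀³ > 0`. -/
theorem deGennes_theta0_positivity
    (μ : ℝ → ℝ) (u : ℝ → ℝ → ℝ) (ξ₀ : ℝ)
    -- `u ξ` is a smooth Neumann eigenfunction of `-d²/dt² + (t+ξ)²` with eigenvalue `μ ξ`
    (hsmooth : ∀ ξ, ContDiff ℝ (⊤ : ℕ∞) (u ξ))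
    (heig : ∀ ξ t, 0 ≤ t →
      - deriv (deriv (u ξ)) t + (t + ξ)^2 * u ξ t = μ ξ * u ξ t)
    (hneum : ∀ ξ, deriv (u ξ) 0 = 0)
    (hpos : ∀ ξ t, 0 ≤ t → 0 < u ξ t)
    (hnorm : ∀ ξ, ∫ t in Ioi (0:ℝ), (u ξ t)^2 = 1)
    (hdecay : ∀ ξ, ∀ k : ℕ,
      Integrable (fun t => t^k * (u ξ t)^2) (volume.restrict (Ioi (0:ℝ))))
    -- `μ ξ` is the lowest such eigenvalue
    (hlowest : ∀ ξ E (v : ℝ → ℝ), ContDiff ℝ (⊤ : ℕ∞) v →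
      (∀ t, 0 ≤ t → - deriv (deriv v) t + (t + ξ)^2 * v t = E * v t) →
      deriv v 0 = 0 → (∫ t in Ioi (0:ℝ), (v t)^2) = 1 →
      Integrable (fun t => t^2 * (v t)^2) (volume.restrict (Ioi (0:ℝ))) →
      μ ξ ≤ E)
    -- `ξ₀` is the minimum point of `μ`
    (hmin : ∀ ξ, μ ξ₀ ≤ μ ξ) :
    μ ξ₀ = ξ₀^2
    ∧ ξ₀ < 0
    ∧ ((u ξ₀ 0)^2 / 3) / 2 - μ ξ₀ * ξ₀
        = (∫ t in Ioi (0:ℝ), (t + ξ₀)^3 * (u ξ₀ t)^2) - ξ₀^3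
    ∧ 0 < ((u ξ₀ 0)^2 / 3) / 2 - μ ξ₀ * ξ₀ := by
  
  have hveq : ∀ ξ t, 0 ≤ t →
      deriv (deriv (u ξ)) t = ((t + ξ)^2 - μ ξ) * u ξ t := by
    intro ξ t ht
    have h := heig ξ t ht
    linear_combination -h
  have hvint0 : ∀ ξ, IntegrableOn (fun t => (u ξ t)^2) (Ioi 0) := by
    intro ξ
    have h := hdecay ξ 0
    simpa [IntegrableOn] using h
  obtain ⟨hD0, hI1, hI2, hI3, idE, idA, idI, idJ⟩ :=
    core (hsmooth ξ₀) (hveq ξ₀) (hneum ξ₀) (hpos ξ₀) (hvint0 ξ₀) (hnorm ξ₀)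
  obtain ⟨m1, hm1e⟩ : ∃ m, (∫ t in Ioi (0:ℝ), (t+ξ₀)*(u ξ₀ t)^2) = m := ⟨_, rfl⟩
  -- Step 1: m1 = 0 via the variational principle
  have hm1 : m1 = 0 := by
    obtain ⟨T, C, hT1, hC, hdec⟩ :=
      decay (hsmooth ξ₀) (hveq ξ₀) (hpos ξ₀) (hvint0 ξ₀) (hnorm ξ₀)
    set η : ℝ := ξ₀ - m1 with hηdef
    have hfe : (fun t => (deriv (u ξ₀) t)^2 + (t+η)^2*(u ξ₀ t)^2)
        = (fun t => ((deriv (u ξ₀) t)^2 + (t+ξ₀)^2*(u ξ₀ t)^2)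
            + ((2*(η-ξ₀))*((t+ξ₀)*(u ξ₀ t)^2) + ((η-ξ₀)^2)*(u ξ₀ t)^2)) := by
      funext t; ring
    have hA0 : IntegrableOn (fun t => (deriv (u ξ₀) t)^2 + (t+ξ₀)^2*(u ξ₀ t)^2) (Ioi 0) :=
      hD0.add hI2
    have hA1 : IntegrableOn (fun t => (2*(η-ξ₀))*((t+ξ₀)*(u ξ₀ t)^2)) (Ioi 0) :=
      hI1.const_mul _
    have hA2 : IntegrableOn (fun t => ((η-ξ₀)^2)*(u ξ₀ t)^2) (Ioi 0) :=
      (hvint0 ξ₀).const_mul _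
    have hA12 : IntegrableOn (fun t => (2*(η-ξ₀))*((t+ξ₀)*(u ξ₀ t)^2)
        + ((η-ξ₀)^2)*(u ξ₀ t)^2) (Ioi 0) := hA1.add hA2
    have hQint : IntegrableOn (fun t => (deriv (u ξ₀) t)^2 + (t+η)^2*(u ξ₀ t)^2) (Ioi 0) := by
      rw [hfe]; exact hA0.add hA12
    have hvar := variational (hsmooth ξ₀) (hpos ξ₀) (hsmooth η) (hveq η) (hneum η)
      (hpos η) (hnorm ξ₀) (hvint0 ξ₀) hQint T C hT1 hC hdec
    have hQeq : (∫ t in Ioi (0:ℝ), ((deriv (u ξ₀) t)^2 + (t+η)^2*(u ξ₀ t)^2))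
        = μ ξ₀ + 2*(η-ξ₀)*m1 + (η-ξ₀)^2 := by
      rw [hfe]
      rw [integral_add hA0 hA12, integral_add hA1 hA2,
        integral_add hD0 hI2, integral_const_mul, integral_const_mul, hnorm ξ₀, hm1e]
      linarith [idE]
    have hmin' := hmin η
    have hηm : η - ξ₀ = -m1 := by rw [hηdef]; ring
    rw [hQeq, hηm] at hvar
    nlinarith
  rw [hm1] at hm1e
  -- Step 2: μ ξ₀ = ξ₀²
  have hC0 : 0 < (u ξ₀ 0)^2 := pow_pos (hpos ξ₀ 0 le_rfl) 2
  have hμξ : μ ξ₀ = ξ₀^2 := by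
    have h2 : (μ ξ₀ - ξ₀^2) * (u ξ₀ 0)^2 = 0 := by
      rw [hm1e] at idA
      linarith
    rcases mul_eq_zero.mp h2 with h | h
    · linarith
    · exact absurd h (ne_of_gt hC0)
  -- Step 3: ξ₀ < 0
  have hξneg : ξ₀ < 0 := by
    have hIt : IntegrableOn (fun t => t*(u ξ₀ t)^2) (Ioi 0) := by
      have h := hdecay ξ₀ 1
      simpa [IntegrableOn] using h
    have hposint : 0 < ∫ t in Ioi (0:ℝ), t*(u ξ₀ t)^2 := by
      have hae : 0 ≤ᶠ[ae (volume.restrict (Ioi (0:ℝ)))] (fun t => t*(u ξ₀ t)^2) := by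
        filter_upwards [ae_restrict_mem measurableSet_Ioi] with t ht
        have h2 := hpos ξ₀ t (le_of_lt ht)
        have h1 : (0:ℝ) < t := ht
        positivity
      rw [setIntegral_pos_iff_support_of_nonneg_ae hae hIt]
      have hsub : Ioi (0:ℝ) ⊆ (Function.support fun t => t * (u ξ₀ t)^2) ∩ Ioi 0 := by
        intro x hx
        have h1 : (0:ℝ) < x := hx
        have h2 := hpos ξ₀ x (le_of_lt h1)
        exact ⟨ne_of_gt (mul_pos h1 (pow_pos h2 2)), hx⟩
      calc (0:ENNReal) < volume (Ioi (0:ℝ)) := by simp [Real.volume_Ioi]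
      _ ≤ volume ((Function.support fun t => t * (u ξ₀ t)^2) ∩ Ioi 0) := measure_mono hsub
    have hsplit : (∫ t in Ioi (0:ℝ), (t+ξ₀)*(u ξ₀ t)^2)
        = (∫ t in Ioi (0:ℝ), t*(u ξ₀ t)^2) + ξ₀ := by
      have he : (fun t => (t+ξ₀)*(u ξ₀ t)^2)
          = (fun t => t*(u ξ₀ t)^2 + ξ₀*(u ξ₀ t)^2) := by funext t; ring
      rw [he, integral_add hIt ((hvint0 ξ₀).const_mul ξ₀), integral_const_mul, hnorm ξ₀]
      ring
    rw [hm1e] at hsplit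
    linarith
  -- Step 4: the third moment
  have hm3 : (∫ t in Ioi (0:ℝ), (t+ξ₀)^3*(u ξ₀ t)^2) = (u ξ₀ 0)^2/6 := by
    rw [hm1e] at idI idJ
    rw [hμξ] at idJ
    have h3 : -(ξ₀^2*(ξ₀^2-ξ₀^2)*(u ξ₀ 0)^2/2) = 0 := by ring
    rw [h3] at idJ
    linarith
  have hgoal3 : ((u ξ₀ 0)^2 / 3) / 2 - μ ξ₀ * ξ₀
      = (∫ t in Ioi (0:ℝ), (t + ξ₀)^3 * (u ξ₀ t)^2) - ξ₀^3 := by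
    rw [hm3, hμξ]
    ring
  refine ⟨hμξ, hξneg, hgoal3, ?_⟩
  rw [hgoal3, hm3]
  nlinarith [hC0, hξneg]
end

section
/- With the notation above, let I₂ = ∫_{t>0}(t+ξ₀) R₀((t+ξ₀)u₀)(t) u₀(t) dt. Then 1 − 4I₂ = μ''(ξ₀)/2 = 3C₁√Θ₀ > 0. -/
open MeasureTheory Set Filter

lemma not_integrableOn_const_Ioi {m a : ℝ} (hm : 0 < m) :
    ¬ IntegrableOn (fun _ : ℝ => m) (Ioi a) volume := by
  rw [integrableOn_const_iff]
  push_neg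
  exact ⟨by simpa using hm.ne', by simp [Real.volume_Ioi]⟩

theorem eigen_decay {y : ℝ → ℝ} {b e : ℝ}
    (hy : ContDiff ℝ (⊤:ℕ∞) y)
    (heq : ∀ t, 0 ≤ t → deriv (deriv y) t = ((t + b)^2 - e) * y t)
    (hpos : ∀ t, 0 ≤ t → 0 < y t)
    (hint : ∀ k : ℕ, Integrable (fun t => t^k * (y t)^2) (volume.restrict (Ioi (0:ℝ)))) :
    (∀ᶠ t in atTop, deriv y t < 0) ∧
    (∀ k : ℕ, Tendsto (fun t => t^k * y t) atTop (nhds 0)) ∧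
    (∀ k : ℕ, Tendsto (fun t => t^k * deriv y t) atTop (nhds 0)) := by
  have hyd : Differentiable ℝ y := hy.differentiable (by norm_num)
  have hyd2 : ContDiff ℝ (⊤:ℕ∞) (deriv y) := (contDiff_infty_iff_deriv.mp hy).2
  have hyd2' : Differentiable ℝ (deriv y) := hyd2.differentiable (by norm_num)
  set a : ℝ := |b| + |e| + 1 with ha
  have ha1 : (1:ℝ) ≤ a := by
    have := abs_nonneg b; have := abs_nonneg e; linarith
  have ha0 : (0:ℝ) ≤ a := by linarith
  -- potential is ≥ 1 beyond a
  have hq : ∀ t, a ≤ t → 1 ≤ (t + b)^2 - e := by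
    intro t ht
    have h1 : |b| + |e| + 1 ≤ t := by rw [ha] at ht; exact ht
    nlinarith [abs_nonneg b, abs_nonneg e, neg_abs_le b, le_abs_self b, neg_abs_le e,
      le_abs_self e]
  have hy2pos : ∀ t, a ≤ t → 0 < deriv (deriv y) t := by
    intro t ht
    have ht0 : (0:ℝ) ≤ t := le_trans ha0 ht
    rw [heq t ht0]
    nlinarith [hpos t ht0, hq t ht]
  have hmono : StrictMonoOn (deriv y) (Ici a) := by
    apply strictMonoOn_of_deriv_pos (convex_Ici a) hyd2'.continuous.continuousOn
    intro x hx
    rw [interior_Ici] at hx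
    exact hy2pos x hx.le
  -- deriv y < 0 on Ici a
  have hneg : ∀ t, a ≤ t → deriv y t < 0 := by
    intro t ht
    by_contra hcon
    push_neg at hcon
    have hpos' : ∀ s, t < s → 0 < deriv y s := by
      intro s hs
      exact lt_of_le_of_lt hcon (hmono (mem_Ici.mpr ht) (mem_Ici.mpr (le_of_lt (lt_of_le_of_lt ht hs))) hs)
    have hymono : StrictMonoOn y (Ici t) := by
      apply strictMonoOn_of_deriv_pos (convex_Ici t) hyd.continuous.continuousOn
      intro x hx
      rw [interior_Ici] at hx
      exact hpos' x hx
    have hm : 0 < y (t+1) := hpos _ (by linarith)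
    have hInt : IntegrableOn (fun s => (y s)^2) (Ioi (0:ℝ)) volume := by
      have := hint 0
      simpa [IntegrableOn] using this
    have hInt2 : IntegrableOn (fun s => (y s)^2) (Ioi (t+1)) volume :=
      hInt.mono_set (Ioi_subset_Ioi (by linarith))
    have hconst : IntegrableOn (fun _ : ℝ => (y (t+1))^2) (Ioi (t+1)) volume := by
      apply Integrable.mono hInt2 aestronglyMeasurable_const
      rw [ae_restrict_iff' measurableSet_Ioi]
      filter_upwards with s hs
      have h1 : y (t+1) ≤ y s := (hymono.monotoneOn) (mem_Ici.mpr (by linarith)) (mem_Ici.mpr (by linarith [hs.out])) hs.out.le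
      have h2 : 0 < y (t+1) := hm
      simp only [Real.norm_eq_abs]
      rw [abs_of_pos (by positivity), abs_of_pos (by nlinarith)]
      nlinarith
    exact not_integrableOn_const_Ioi (by positivity) hconst
  -- y is antitone on [a, ∞)
  have hanti : AntitoneOn y (Ici a) := by
    apply antitoneOn_of_deriv_nonpos (convex_Ici a) hyd.continuous.continuousOn
      (hyd.differentiableOn)
    intro x hx
    rw [interior_Ici] at hx
    exact (hneg x hx.le).le
  -- moments
  set M : ℕ → ℝ := fun k => ∫ s in Ioi (0:ℝ), s^k * (y s)^2 with hM
  have hMnonneg : ∀ k, 0 ≤ M k := by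
    intro k
    apply setIntegral_nonneg measurableSet_Ioi
    intro s hs
    have : (0:ℝ) < s := hs
    positivity
  have hcont2 : Continuous fun s : ℝ => (y s)^2 := (hyd.continuous).pow 2
  -- key moment bound
  have hkey : ∀ (k:ℕ), ∀ t : ℝ, a + 1 ≤ t → (t-1)^k * (y t)^2 ≤ M k := by
    intro k t ht
    have ht1 : (1:ℝ) ≤ t - 1 := by linarith
    have h0t : (0:ℝ) < t - 1 := by linarith
    have step1 : (y t)^2 * 1 ≤ ∫ s in Ioc (t-1) t, (y s)^2 := by
      have hμ : volume (Ioc (t-1) t) ≠ ⊤ := by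
        rw [Real.volume_Ioc]; exact ENNReal.ofReal_ne_top
      have hle : ∀ x ∈ Ioc (t-1) t, (y t)^2 ≤ (y x)^2 := by
        intro x hx
        have hax : a ≤ x := by linarith [hx.1]
        have hipos := hpos x (by linarith)
        have hyx : y t ≤ y x := hanti (mem_Ici.mpr hax) (mem_Ici.mpr (by linarith)) hx.2
        have h0 : 0 ≤ y t := (hpos t (by linarith)).le
        nlinarith
      have hIntOn : IntegrableOn (fun s => (y s)^2) (Ioc (t-1) t) volume :=
        hcont2.integrableOn_Ioc
      have := setIntegral_ge_of_const_le measurableSet_Ioc hμ hle hIntOn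
      have hvol : (volume (Ioc (t-1) t)).toReal = 1 := by
        rw [Real.volume_Ioc]
        rw [ENNReal.toReal_ofReal (by linarith)]
        ring
      rw [measureReal_def, hvol, one_smul] at this
      simpa using this
    have step2 : ∫ s in Ioc (t-1) t, (t-1)^k * (y s)^2 ≤ ∫ s in Ioc (t-1) t, s^k * (y s)^2 := by
      apply setIntegral_mono_on
      · exact ((continuous_const.mul hcont2)).integrableOn_Ioc
      · exact ((continuous_pow k).mul hcont2).integrableOn_Ioc
      · exact measurableSet_Ioc
      · intro x hx
        have h1 : t - 1 ≤ x := hx.1.le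
        have h2 : (t-1)^k ≤ x^k := pow_le_pow_left₀ (by linarith) h1 k
        nlinarith [sq_nonneg (y x)]
    have step3 : ∫ s in Ioc (t-1) t, s^k * (y s)^2 ≤ M k := by
      apply setIntegral_mono_set
      · exact hint k
      · rw [EventuallyLE]
        rw [ae_restrict_iff' measurableSet_Ioi]
        filter_upwards with s hs
        have : (0:ℝ) < s := hs
        positivity
      · exact (Ioc_subset_Ioi_self.trans (Ioi_subset_Ioi (by linarith))).eventuallyLE
    have hconstmul : ∫ s in Ioc (t-1) t, (t-1)^k * (y s)^2 = (t-1)^k * ∫ s in Ioc (t-1) t, (y s)^2 := by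
      exact MeasureTheory.integral_const_mul _ _
    have hpk : (0:ℝ) ≤ (t-1)^k := by positivity
    calc (t-1)^k * (y t)^2 = (t-1)^k * ((y t)^2 * 1) := by ring
      _ ≤ (t-1)^k * ∫ s in Ioc (t-1) t, (y s)^2 := by
          exact mul_le_mul_of_nonneg_left step1 hpk
      _ = ∫ s in Ioc (t-1) t, (t-1)^k * (y s)^2 := hconstmul.symm
      _ ≤ ∫ s in Ioc (t-1) t, s^k * (y s)^2 := step2
      _ ≤ M k := step3
  -- decay of (t-1)^k y t
  have aux1 : ∀ k : ℕ, Tendsto (fun t => (t-1)^k * y t) atTop (nhds 0) := by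
    intro k
    apply squeeze_zero_norm' (a := fun t => Real.sqrt (M (2*k+2)) / (t-1))
    · filter_upwards [eventually_ge_atTop (a+1)] with t ht
      have h0t : (0:ℝ) < t - 1 := by linarith
      have hyt : 0 < y t := hpos t (by linarith)
      have hX : (0:ℝ) ≤ (t-1)^k * y t := by positivity
      have hsq : (((t-1)^k * y t) * (t-1))^2 = (t-1)^(2*k+2) * (y t)^2 := by ring
      have hb : ((t-1)^k * y t) * (t-1) ≤ Real.sqrt (M (2*k+2)) := by
        have h1 : (0:ℝ) ≤ ((t-1)^k * y t) * (t-1) := by positivity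
        calc ((t-1)^k * y t) * (t-1) = Real.sqrt ((((t-1)^k * y t) * (t-1))^2) :=
              (Real.sqrt_sq h1).symm
          _ ≤ Real.sqrt (M (2*k+2)) := by
              apply Real.sqrt_le_sqrt
              rw [hsq]
              exact hkey (2*k+2) t ht
      rw [Real.norm_eq_abs, abs_of_nonneg hX]
      rw [le_div_iff₀ h0t]
      exact hb
    · apply Filter.Tendsto.div_atTop (tendsto_const_nhds)
      exact tendsto_atTop_add_const_right atTop (-1) tendsto_id
  -- decay of t^k y t
  have hyk : ∀ k : ℕ, Tendsto (fun t => t^k * y t) atTop (nhds 0) := by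
    intro k
    apply squeeze_zero_norm' (a := fun t => 2^k * ((t-1)^k * y t))
    · filter_upwards [eventually_ge_atTop (max (a+1) 2)] with t ht
      have ht2 : (2:ℝ) ≤ t := le_trans (le_max_right _ _) ht
      have hta : a + 1 ≤ t := le_trans (le_max_left _ _) ht
      have hyt : 0 < y t := hpos t (by linarith)
      have htk : t^k ≤ (2*(t-1))^k := pow_le_pow_left₀ (by linarith) (by linarith) k
      rw [Real.norm_eq_abs, abs_of_nonneg (by positivity)]
      calc t^k * y t ≤ (2*(t-1))^k * y t := by nlinarith
        _ = 2^k * ((t-1)^k * y t) := by rw [mul_pow]; ring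
    · have := (aux1 k).const_mul (2^k : ℝ)
      simpa using this
  refine ⟨eventually_atTop.mpr ⟨a, hneg⟩, hyk, ?_⟩
  -- derivative bound
  have hderivbnd : ∀ t : ℝ, a + 1 ≤ t → -deriv y t ≤ y (t-1) := by
    intro t ht
    have h1 : ∫ s in (t-1)..t, deriv y s = y t - y (t-1) := by
      apply intervalIntegral.integral_eq_sub_of_hasDerivAt
      · intro x _
        exact (hyd x).hasDerivAt
      · exact (hyd2'.continuous.continuousOn).intervalIntegrable
    have h2 : ∫ s in (t-1)..t, deriv y s ≤ ∫ s in (t-1)..t, deriv y t := by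
      apply intervalIntegral.integral_mono_on (by linarith)
      · exact (hyd2'.continuous.continuousOn).intervalIntegrable
      · exact intervalIntegrable_const
      · intro x hx
        exact hmono.monotoneOn (mem_Ici.mpr (by linarith [hx.1])) (mem_Ici.mpr (by linarith)) hx.2
    rw [h1] at h2
    rw [intervalIntegral.integral_const] at h2
    have h3 : y t - y (t-1) ≤ deriv y t := by
      have : (t - (t-1)) = 1 := by ring
      rw [this] at h2
      simpa using h2
    have h4 : 0 < y t := hpos t (by linarith)
    linarith
  intro k
  apply squeeze_zero_norm' (a := fun t => 2^k * ((t-1)^k * y (t-1)))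
  · filter_upwards [eventually_ge_atTop (max (a+1) 2)] with t ht
    have ht2 : (2:ℝ) ≤ t := le_trans (le_max_right _ _) ht
    have hta : a + 1 ≤ t := le_trans (le_max_left _ _) ht
    have hneg' : deriv y t < 0 := hneg t (by linarith)
    have hbd := hderivbnd t hta
    have hyt1 : 0 < y (t-1) := hpos (t-1) (by linarith)
    have htk : t^k ≤ (2*(t-1))^k := pow_le_pow_left₀ (by linarith) (by linarith) k
    rw [Real.norm_eq_abs, abs_mul, abs_of_nonneg (by positivity : (0:ℝ) ≤ t^k),
      abs_of_neg hneg']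
    calc t^k * -deriv y t ≤ (2*(t-1))^k * y (t-1) := by nlinarith [pow_nonneg (by linarith : (0:ℝ) ≤ t) k]
      _ = 2^k * ((t-1)^k * y (t-1)) := by rw [mul_pow]; ring
  · have hcomp : Tendsto (fun t : ℝ => (t-1)^k * y (t-1)) atTop (nhds 0) := by
      have := (hyk k).comp (tendsto_atTop_add_const_right atTop (-1) tendsto_id)
      simpa [Function.comp_def, ← sub_eq_add_neg] using this
    have := hcomp.const_mul (2^k : ℝ)
    simpa using this

lemma tendsto_FTC {F f : ℝ → ℝ}
    (hF : ∀ t : ℝ, 0 ≤ t → HasDerivAt F (f t) t)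
    (hf : IntegrableOn f (Ioi (0:ℝ)) volume)
    (hfc : Continuous f) :
    Tendsto F atTop (nhds (F 0 + ∫ t in Ioi (0:ℝ), f t)) := by
  have key : ∀ R : ℝ, 0 ≤ R → ∫ t in (0:ℝ)..R, f t = F R - F 0 := by
    intro R hR
    apply intervalIntegral.integral_eq_sub_of_hasDerivAt
    · intro x hx
      rw [uIcc_of_le hR] at hx
      exact hF x hx.1
    · exact hfc.intervalIntegrable _ _
  have h2 : Tendsto (fun R => ∫ t in (0:ℝ)..R, f t) atTop (nhds (∫ t in Ioi (0:ℝ), f t)) :=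
    intervalIntegral_tendsto_integral_Ioi 0 hf tendsto_id
  have h3 := h2.const_add (F 0)
  apply h3.congr'
  filter_upwards [eventually_ge_atTop (0:ℝ)] with R hR
  rw [key R hR]; ring

theorem energy_identity {y : ℝ → ℝ} {b e : ℝ}
    (hy : ContDiff ℝ (⊤:ℕ∞) y)
    (heq : ∀ t, 0 ≤ t → deriv (deriv y) t = ((t + b)^2 - e) * y t)
    (hneum : deriv y 0 = 0)
    (hpos : ∀ t, 0 ≤ t → 0 < y t)
    (hnorm : ∫ t in Ioi (0:ℝ), (y t)^2 = 1)
    (hint : ∀ k : ℕ, Integrable (fun t => t^k * (y t)^2) (volume.restrict (Ioi (0:ℝ)))) :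
    IntegrableOn (fun t => (deriv y t)^2 + (t+b)^2 * (y t)^2) (Ioi (0:ℝ)) volume ∧
    (∫ t in Ioi (0:ℝ), ((deriv y t)^2 + (t+b)^2 * (y t)^2)) = e ∧
    IntegrableOn (fun t => (deriv y t)^2) (Ioi (0:ℝ)) volume := by
  have hyd : Differentiable ℝ y := hy.differentiable (by norm_num)
  have hyd2 : ContDiff ℝ (⊤:ℕ∞) (deriv y) := (contDiff_infty_iff_deriv.mp hy).2
  have hyd2' : Differentiable ℝ (deriv y) := hyd2.differentiable (by norm_num)
  obtain ⟨hnegd, hdecayk, hdecayk'⟩ := eigen_decay hy heq hpos hint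
  have hy0 : Tendsto y atTop (nhds 0) := by simpa using hdecayk 0
  have hy'0 : Tendsto (deriv y) atTop (nhds 0) := by simpa using hdecayk' 0
  have hFten : Tendsto (fun t => y t * deriv y t) atTop (nhds 0) := by
    have := hy0.mul hy'0
    simpa using this
  set g : ℝ → ℝ := fun t => (deriv y t)^2 + (t+b)^2 * (y t)^2 with hg
  have hgc : Continuous g := by
    apply Continuous.add
    · exact (hyd2'.continuous).pow 2
    · exact (((continuous_id.add continuous_const).pow 2)).mul ((hyd.continuous).pow 2)
  have hgnn : ∀ t, 0 ≤ g t := fun t => by positivity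
  have hy2int : IntegrableOn (fun s => (y s)^2) (Ioi (0:ℝ)) volume := by simpa [IntegrableOn] using hint 0
  -- FTC identity
  have key : ∀ R : ℝ, 0 ≤ R →
      ∫ t in (0:ℝ)..R, (g t - e * (y t)^2) = y R * deriv y R := by
    intro R hR
    have := intervalIntegral.integral_eq_sub_of_hasDerivAt
      (f := fun t => y t * deriv y t) (f' := fun t => g t - e * (y t)^2)
      (a := 0) (b := R) ?_ ?_
    · rw [this, hneum]; ring
    · intro x hx
      rw [uIcc_of_le hR] at hx
      have hx0 : (0:ℝ) ≤ x := hx.1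
      have h := ((hyd x).hasDerivAt).mul ((hyd2' x).hasDerivAt)
      refine h.congr_deriv ?_
      rw [heq x hx0]; ring
    · apply Continuous.intervalIntegrable
      exact hgc.sub (continuous_const.mul ((hyd.continuous).pow 2))
  have keyg : ∀ R : ℝ, 0 ≤ R →
      ∫ t in (0:ℝ)..R, g t = y R * deriv y R + e * ∫ t in (0:ℝ)..R, (y t)^2 := by
    intro R hR
    have hsplit : ∫ t in (0:ℝ)..R, g t
        = (∫ t in (0:ℝ)..R, (g t - e * (y t)^2)) + ∫ t in (0:ℝ)..R, e * (y t)^2 := by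
      rw [← intervalIntegral.integral_add]
      · apply intervalIntegral.integral_congr
        intro x _
        ring
      · apply Continuous.intervalIntegrable
        exact hgc.sub (continuous_const.mul ((hyd.continuous).pow 2))
      · exact (continuous_const.mul ((hyd.continuous).pow 2)).intervalIntegrable _ _
    rw [hsplit, key R hR, intervalIntegral.integral_const_mul]
  have hy2bnd : ∀ R : ℝ, 0 ≤ R → ∫ t in (0:ℝ)..R, (y t)^2 ≤ 1 := by
    intro R hR
    rw [intervalIntegral.integral_of_le hR, ← hnorm]
    apply setIntegral_mono_set hy2int
    · rw [EventuallyLE, ae_restrict_iff' measurableSet_Ioi]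
      filter_upwards with s _
      positivity
    · exact Ioc_subset_Ioi_self.eventuallyLE
  have hy2nn : ∀ R : ℝ, 0 ≤ R → 0 ≤ ∫ t in (0:ℝ)..R, (y t)^2 := by
    intro R hR
    rw [intervalIntegral.integral_of_le hR]
    apply setIntegral_nonneg measurableSet_Ioc
    intro x _; positivity
  -- integrability of g on Ioi 0
  have hgint : IntegrableOn g (Ioi (0:ℝ)) volume := by
    apply integrableOn_Ioi_of_intervalIntegral_norm_bounded (1 + |e|) 0
      (fun R : ℝ => hgc.integrableOn_Ioc) tendsto_id
    filter_upwards [hFten.eventually (eventually_le_nhds (by norm_num : (0:ℝ) < 1)) ,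
      eventually_ge_atTop (0:ℝ),
      hFten.eventually (eventually_ge_nhds (by norm_num : (-1:ℝ) < 0))] with R h1 h2 h3
    have hnorme : ∫ t in (0:ℝ)..R, ‖g t‖ = ∫ t in (0:ℝ)..R, g t := by
      apply intervalIntegral.integral_congr
      intro x _
      exact Real.norm_of_nonneg (hgnn x)
    show ∫ t in (0:ℝ)..(id R), ‖g t‖ ≤ 1 + |e|
    simp only [id]
    rw [hnorme, keyg R h2]
    have habs : |y R * deriv y R| ≤ 1 := abs_le.mpr ⟨h3, h1⟩
    have h4 := hy2bnd R h2
    have h5 := hy2nn R h2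
    have h6 : e * ∫ t in (0:ℝ)..R, (y t)^2 ≤ |e| := by
      rcases le_or_gt 0 e with he | he
      · calc e * ∫ t in (0:ℝ)..R, (y t)^2 ≤ e * 1 := by nlinarith
          _ ≤ |e| := by rw [mul_one]; exact le_abs_self e
      · calc e * ∫ t in (0:ℝ)..R, (y t)^2 ≤ 0 := by nlinarith
          _ ≤ |e| := abs_nonneg e
    have h7 : y R * deriv y R ≤ 1 := le_of_abs_le habs
    linarith
  refine ⟨hgint, ?_, ?_⟩
  · -- the value
    have hlim1 : Tendsto (fun R => ∫ t in (0:ℝ)..R, g t) atTop (nhds (∫ t in Ioi (0:ℝ), g t)) :=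
      intervalIntegral_tendsto_integral_Ioi 0 hgint tendsto_id
    have hy2lim : Tendsto (fun R => ∫ t in (0:ℝ)..R, (y t)^2) atTop (nhds 1) := by
      have := intervalIntegral_tendsto_integral_Ioi 0 hy2int tendsto_id
      rwa [hnorm] at this
    have hlim2 : Tendsto (fun R => y R * deriv y R + e * ∫ t in (0:ℝ)..R, (y t)^2)
        atTop (nhds (0 + e * 1)) := hFten.add (hy2lim.const_mul e)
    have hlim2' : Tendsto (fun R => ∫ t in (0:ℝ)..R, g t) atTop (nhds (0 + e * 1)) := by
      apply hlim2.congr'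
      filter_upwards [eventually_ge_atTop (0:ℝ)] with R hR
      rw [keyg R hR]
    have := tendsto_nhds_unique hlim1 hlim2'
    rw [this]; ring
  · -- integrability of (deriv y)^2
    apply Integrable.mono hgint (((hyd2'.continuous).pow 2).aestronglyMeasurable)
    rw [ae_restrict_iff' measurableSet_Ioi]
    filter_upwards with t ht
    rw [Real.norm_eq_abs, Real.norm_eq_abs, Pi.pow_apply]
    rw [abs_of_nonneg (by positivity), abs_of_nonneg (hgnn t)]
    simp only [hg]
    nlinarith [sq_nonneg ((t+b) * y t)]

noncomputable def cutoff (R t : ℝ) : ℝ := Real.smoothTransition (R + 1 - t)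

lemma cutoff_one {R t : ℝ} (h : t ≤ R) : cutoff R t = 1 := by
  unfold cutoff
  exact Real.smoothTransition.one_of_one_le (by linarith)

lemma cutoff_zero {R t : ℝ} (h : R + 1 ≤ t) : cutoff R t = 0 := by
  unfold cutoff
  exact Real.smoothTransition.zero_of_nonpos (by linarith)

lemma cutoff_nonneg (R t : ℝ) : 0 ≤ cutoff R t := Real.smoothTransition.nonneg _

lemma cutoff_le_one (R t : ℝ) : cutoff R t ≤ 1 := Real.smoothTransition.le_one _

lemma sT_contDiff : ContDiff ℝ (⊤:ℕ∞) Real.smoothTransition := Real.smoothTransition.contDiff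

lemma sT_deriv_cont : Continuous (deriv Real.smoothTransition) :=
  ((contDiff_infty_iff_deriv.mp sT_contDiff).2).continuous

lemma sT_deriv_zero_of_neg {x : ℝ} (h : x < 0) : deriv Real.smoothTransition x = 0 := by
  have heq : Real.smoothTransition =ᶠ[nhds x] (fun _ => (0:ℝ)) := by
    filter_upwards [Iio_mem_nhds h] with s hs
    exact Real.smoothTransition.zero_of_nonpos (le_of_lt hs)
  rw [heq.deriv_eq]
  exact deriv_const x 0

lemma sT_deriv_zero_of_gt {x : ℝ} (h : 1 < x) : deriv Real.smoothTransition x = 0 := by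
  have heq : Real.smoothTransition =ᶠ[nhds x] (fun _ => (1:ℝ)) := by
    filter_upwards [Ioi_mem_nhds h] with s hs
    exact Real.smoothTransition.one_of_one_le (le_of_lt hs)
  rw [heq.deriv_eq]
  exact deriv_const x 1

lemma sT_deriv_bound : ∃ C : ℝ, 0 ≤ C ∧ ∀ x : ℝ, |deriv Real.smoothTransition x| ≤ C := by
  obtain ⟨C, hC⟩ := (isCompact_Icc (a := (-1:ℝ)) (b := 2)).exists_bound_of_continuousOn
    sT_deriv_cont.continuousOn
  refine ⟨max C 0, le_max_right _ _, ?_⟩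
  intro x
  by_cases hx : x ∈ Icc (-1:ℝ) 2
  · calc |deriv Real.smoothTransition x| ≤ C := hC x hx
      _ ≤ max C 0 := le_max_left _ _
  · have h0 : deriv Real.smoothTransition x = 0 := by
      simp only [mem_Icc, not_and_or, not_le] at hx
      rcases hx with h | h
      · exact sT_deriv_zero_of_neg (by linarith)
      · exact sT_deriv_zero_of_gt (by linarith)
    rw [h0]
    simp

lemma sT_differentiable : Differentiable ℝ Real.smoothTransition :=
  sT_contDiff.differentiable (by norm_num)

lemma cutoff_hasDerivAt (R t : ℝ) :
    HasDerivAt (cutoff R) (-(deriv Real.smoothTransition (R + 1 - t))) t := by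
  have h1 : HasDerivAt Real.smoothTransition (deriv Real.smoothTransition (R + 1 - t))
      (R + 1 - t) := (sT_differentiable _).hasDerivAt
  have h2 : HasDerivAt (fun s : ℝ => R + 1 - s) (-1) t := by
    simpa using (hasDerivAt_id t).const_sub (R + 1)
  have := h1.comp t h2
  rw [mul_neg_one] at this; exact this

lemma sq_cutoff_bound {A c p q C : ℝ} (hA : |A| ≤ C) (hc : |c| ≤ 1) :
    (A*p + c*q)^2 ≤ C^2*p^2 + 2*C*|p*q| + q^2 := by
  have hC0 : 0 ≤ C := le_trans (abs_nonneg A) hA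
  have h1 : A^2 ≤ C^2 := by nlinarith [sq_abs A, abs_nonneg A]
  have h2 : c^2 ≤ 1 := by nlinarith [sq_abs c, abs_nonneg c]
  have h3 : A*c*(p*q) ≤ C*|p*q| := by
    have habs : |A*c*(p*q)| ≤ C * |p*q| := by
      rw [abs_mul, abs_mul]
      have hAc : |A| * |c| ≤ C := by nlinarith [abs_nonneg A]
      nlinarith [abs_nonneg (p*q), abs_nonneg A, abs_nonneg c]
    linarith [le_abs_self (A*c*(p*q))]
  nlinarith [mul_le_mul_of_nonneg_right h1 (sq_nonneg p),
    mul_le_mul_of_nonneg_right h2 (sq_nonneg q), sq_nonneg p, sq_nonneg q]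

lemma interval_to_Ioi {f : ℝ → ℝ} {S : ℝ} (hS : 0 ≤ S) (hf : Continuous f)
    (hzero : ∀ t, S ≤ t → f t = 0) :
    ∫ t in (0:ℝ)..S, f t = ∫ t in Ioi (0:ℝ), f t := by
  have hIoiS : IntegrableOn f (Ioi S) volume := by
    apply (integrable_zero _ _ _).congr
    rw [EventuallyEq, ae_restrict_iff' measurableSet_Ioi]
    filter_upwards with x hx
    exact (hzero x (le_of_lt hx)).symm
  rw [intervalIntegral.integral_of_le hS]
  have : Ioi (0:ℝ) = Ioc 0 S ∪ Ioi S := (Ioc_union_Ioi_eq_Ioi hS).symm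
  rw [this, setIntegral_union (Ioc_disjoint_Ioi le_rfl) measurableSet_Ioi
    hf.integrableOn_Ioc hIoiS]
  have hz : ∫ x in Ioi S, f x = 0 :=
    setIntegral_eq_zero_of_forall_eq_zero (fun x hx => hzero x (le_of_lt hx))
  rw [hz]
  ring

lemma cutoff_continuous (R : ℝ) : Continuous (cutoff R) :=
  sT_contDiff.continuous.comp (continuous_const.sub continuous_id)

theorem variational_le {w y : ℝ → ℝ} {ζ eζ : ℝ}
    (hw : ContDiff ℝ (⊤:ℕ∞) w)
    (hweq : ∀ t, 0 ≤ t → deriv (deriv w) t = ((t + ζ)^2 - eζ) * w t)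
    (hwneum : deriv w 0 = 0)
    (hwpos : ∀ t, 0 ≤ t → 0 < w t)
    (hy : ContDiff ℝ (⊤:ℕ∞) y)
    (hynorm : ∫ t in Ioi (0:ℝ), (y t)^2 = 1)
    (hyint : ∀ k : ℕ, Integrable (fun t => t^k * (y t)^2) (volume.restrict (Ioi (0:ℝ))))
    (hy'int : IntegrableOn (fun t => (deriv y t)^2) (Ioi (0:ℝ)) volume) :
    eζ ≤ ∫ t in Ioi (0:ℝ), ((deriv y t)^2 + (t + ζ)^2 * (y t)^2) := by
  have hwd : Differentiable ℝ w := hw.differentiable (by norm_num)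
  have hwd2 : ContDiff ℝ (⊤:ℕ∞) (deriv w) := (contDiff_infty_iff_deriv.mp hw).2
  have hwd2' : Differentiable ℝ (deriv w) := hwd2.differentiable (by norm_num)
  have hyd : Differentiable ℝ y := hy.differentiable (by norm_num)
  have hyd2 : ContDiff ℝ (⊤:ℕ∞) (deriv y) := (contDiff_infty_iff_deriv.mp hy).2
  have hyd2' : Differentiable ℝ (deriv y) := hyd2.differentiable (by norm_num)
  obtain ⟨C, hC0, hCb⟩ := sT_deriv_bound
  have hyint0 : Integrable (fun t => (y t)^2) (volume.restrict (Ioi (0:ℝ))) := by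
    simpa using hyint 0
  -- the per-n inequality
  have main : ∀ n : ℕ, eζ * (∫ t in Ioi (0:ℝ), (cutoff (n:ℝ) t * y t)^2)
      ≤ ∫ t in Ioi (0:ℝ),
        ((-(deriv Real.smoothTransition ((n:ℝ)+1-t)) * y t + cutoff (n:ℝ) t * deriv y t)^2
          + (t+ζ)^2 * (cutoff (n:ℝ) t * y t)^2) := by
    intro n
    set ψ : ℝ → ℝ := fun t => cutoff (n:ℝ) t * y t with hψdef
    set ψ' : ℝ → ℝ := fun t =>
      -(deriv Real.smoothTransition ((n:ℝ)+1-t)) * y t + cutoff (n:ℝ) t * deriv y t with hψ'def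
    have hψd : ∀ t, HasDerivAt ψ (ψ' t) t := fun t =>
      (cutoff_hasDerivAt _ t).mul ((hyd t).hasDerivAt)
    have hχc : Continuous (cutoff (n:ℝ)) := cutoff_continuous _
    have hψc : Continuous ψ := hχc.mul hyd.continuous
    have hψ'c : Continuous ψ' := by
      apply Continuous.add
      · exact ((sT_deriv_cont.comp (continuous_const.sub continuous_id)).neg).mul hyd.continuous
      · exact hχc.mul hyd2'.continuous
    set S : ℝ := (n:ℝ) + 2 with hSdef
    have hS0 : (0:ℝ) ≤ S := by positivity
    set q : ℝ → ℝ := fun t => (t+ζ)^2 - eζ with hqdef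
    set r : ℝ → ℝ := fun t => deriv w t / w t with hrdef
    set B : ℝ → ℝ := fun t => deriv w t * (ψ t)^2 / w t with hBdef
    have hqc : Continuous q := by
      apply Continuous.sub _ continuous_const
      exact (continuous_id.add continuous_const).pow 2
    have hBderiv : ∀ t ∈ Icc (0:ℝ) S,
        HasDerivAt B (ψ' t^2 + q t * ψ t^2 - (ψ' t - r t * ψ t)^2) t := by
      intro t ht
      have ht0 : (0:ℝ) ≤ t := ht.1
      have hwt : w t ≠ 0 := ne_of_gt (hwpos t ht0)
      have hnum := ((hwd2' t).hasDerivAt).mul ((hψd t).pow 2)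
      have hdiv := hnum.div ((hwd t).hasDerivAt) hwt
      refine hdiv.congr_deriv ?_
      rw [hweq t ht0]
      simp only [hqdef, hrdef, Pi.mul_apply, Pi.pow_apply]
      field_simp
      ring
    have hrcont : ContinuousOn r (Icc 0 S) := by
      apply ContinuousOn.div (hwd2'.continuous.continuousOn) (hwd.continuous.continuousOn)
      exact fun t ht => ne_of_gt (hwpos t ht.1)
    have hint1 : IntervalIntegrable (fun t => ψ' t^2 + q t * ψ t^2) volume 0 S := by
      apply Continuous.intervalIntegrable
      exact ((hψ'c.pow 2)).add (hqc.mul (hψc.pow 2))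
    have hint2 : IntervalIntegrable (fun t => (ψ' t - r t * ψ t)^2) volume 0 S := by
      apply ContinuousOn.intervalIntegrable
      rw [uIcc_of_le hS0]
      exact ((hψ'c.continuousOn.sub (hrcont.mul hψc.continuousOn)).pow 2)
    have hftc := intervalIntegral.integral_eq_sub_of_hasDerivAt
      (f := B) (f' := fun t => ψ' t^2 + q t * ψ t^2 - (ψ' t - r t * ψ t)^2) (a := 0) (b := S)
      (fun t ht => hBderiv t (by rwa [uIcc_of_le hS0] at ht)) (hint1.sub hint2)
    have hψS : ψ S = 0 := by
      simp only [hψdef]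
      rw [cutoff_zero (by simp only [hSdef]; linarith)]
      ring
    have hBS : B S = 0 := by
      simp only [hBdef, hψS]
      ring_nf
    have hB0 : B 0 = 0 := by
      simp only [hBdef, hwneum]
      ring_nf
    rw [hBS, hB0, sub_zero] at hftc
    rw [intervalIntegral.integral_sub hint1 hint2] at hftc
    have h2 : 0 ≤ ∫ t in (0:ℝ)..S, (ψ' t - r t * ψ t)^2 :=
      intervalIntegral.integral_nonneg hS0 (fun x _ => sq_nonneg _)
    have h3 : 0 ≤ ∫ t in (0:ℝ)..S, (ψ' t^2 + q t * ψ t^2) := by linarith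
    -- expand q
    have hintA : IntervalIntegrable (fun t => ψ' t^2 + (t+ζ)^2 * ψ t^2) volume 0 S := by
      apply Continuous.intervalIntegrable
      exact (hψ'c.pow 2).add (((continuous_id.add continuous_const).pow 2).mul (hψc.pow 2))
    have hintB : IntervalIntegrable (fun t => eζ * ψ t^2) volume 0 S :=
      (continuous_const.mul (hψc.pow 2)).intervalIntegrable _ _
    have h4 : ∫ t in (0:ℝ)..S, (ψ' t^2 + q t * ψ t^2)
        = (∫ t in (0:ℝ)..S, (ψ' t^2 + (t+ζ)^2 * ψ t^2)) - ∫ t in (0:ℝ)..S, eζ * ψ t^2 := by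
      rw [← intervalIntegral.integral_sub hintA hintB]
      apply intervalIntegral.integral_congr
      intro x _
      simp only [hqdef]
      ring
    have h5 : ∫ t in (0:ℝ)..S, eζ * ψ t^2 = eζ * ∫ t in (0:ℝ)..S, ψ t^2 :=
      intervalIntegral.integral_const_mul _ _
    -- convert to Ioi integrals
    have hvanish : ∀ t, S ≤ t → cutoff (n:ℝ) t = 0 ∧ deriv Real.smoothTransition ((n:ℝ)+1-t) = 0 := by
      intro t htS
      have h1 : (n:ℝ) + 1 ≤ t := by simp only [hSdef] at htS; linarith
      constructor
      · exact cutoff_zero h1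
      · exact sT_deriv_zero_of_neg (by simp only [hSdef] at htS; linarith)
    have hconv1 : ∫ t in (0:ℝ)..S, (ψ' t^2 + (t+ζ)^2 * ψ t^2)
        = ∫ t in Ioi (0:ℝ), (ψ' t^2 + (t+ζ)^2 * ψ t^2) := by
      apply interval_to_Ioi hS0 ((hψ'c.pow 2).add (((continuous_id.add continuous_const).pow 2).mul (hψc.pow 2)))
      intro t htS
      obtain ⟨hz1, hz2⟩ := hvanish t htS
      simp only [Pi.add_apply, Pi.mul_apply, Pi.pow_apply, id_eq, hψdef, hψ'def, hz1, hz2]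
      ring
    have hconv2 : ∫ t in (0:ℝ)..S, ψ t^2 = ∫ t in Ioi (0:ℝ), ψ t^2 := by
      apply interval_to_Ioi hS0 (hψc.pow 2)
      intro t htS
      obtain ⟨hz1, _⟩ := hvanish t htS
      simp only [Pi.pow_apply, hψdef, hz1]
      ring
    rw [h4, h5, hconv1, hconv2] at h3
    simp only [hψdef, hψ'def] at h3
    linarith
  -- limit as n → ∞
  have habsyy' : Integrable (fun t => |y t * deriv y t|) (volume.restrict (Ioi (0:ℝ))) := by
    apply Integrable.mono (hyint0.add hy'int) ((hyd.continuous.mul hyd2'.continuous).abs.aestronglyMeasurable)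
    filter_upwards with t
    simp only [Pi.add_apply, Pi.mul_apply, Real.norm_eq_abs, abs_abs]
    rw [abs_of_nonneg (by positivity : (0:ℝ) ≤ (y t)^2 + (deriv y t)^2)]
    have := abs_mul (y t) (deriv y t)
    nlinarith [sq_nonneg (|y t| - |deriv y t|), abs_nonneg (y t), abs_nonneg (deriv y t),
      sq_abs (y t), sq_abs (deriv y t), abs_nonneg (y t * deriv y t)]
  have htζint : Integrable (fun t => (t+ζ)^2 * (y t)^2) (volume.restrict (Ioi (0:ℝ))) := by
    have h2 := hyint 2
    have h1 := (hyint 1).const_mul (2*ζ)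
    have h0 := (hyint 0).const_mul (ζ^2)
    have := (h2.add h1).add h0
    have heqf : (fun t => (t+ζ)^2 * (y t)^2)
        = fun t => t^2 * (y t)^2 + 2*ζ*(t^1*(y t)^2) + ζ^2*(t^0*(y t)^2) := by
      funext t; ring
    rw [heqf]
    exact this
  have hdomint : Integrable (fun t => C^2*(y t)^2 + 2*C*|y t * deriv y t|
      + (deriv y t)^2 + (t+ζ)^2*(y t)^2) (volume.restrict (Ioi (0:ℝ))) := by
    exact (((hyint0.const_mul (C^2)).add (habsyy'.const_mul (2*C))).add hy'int).add htζint
  have hL : Tendsto (fun n : ℕ => eζ * ∫ t in Ioi (0:ℝ), (cutoff (n:ℝ) t * y t)^2)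
      atTop (nhds (eζ * 1)) := by
    apply Tendsto.const_mul
    have hDCT := tendsto_integral_of_dominated_convergence
      (F := fun (n:ℕ) (t:ℝ) => (cutoff (n:ℝ) t * y t)^2)
      (f := fun t => (y t)^2) (bound := fun t => (y t)^2)
      (μ := volume.restrict (Ioi (0:ℝ)))
      (fun n => (((cutoff_continuous _).mul hyd.continuous).pow 2).aestronglyMeasurable)
      hyint0
      (fun n => by
        filter_upwards with t
        rw [Real.norm_eq_abs, abs_of_nonneg (sq_nonneg _)]
        have h1 := cutoff_nonneg (n:ℝ) t
        have h2 := cutoff_le_one (n:ℝ) t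
        have h3 : cutoff (n:ℝ) t^2 ≤ 1 := by nlinarith
        nlinarith [mul_le_mul_of_nonneg_right h3 (sq_nonneg (y t))])
      (by
        filter_upwards with t
        obtain ⟨N, hN⟩ := exists_nat_ge t
        apply tendsto_atTop_of_eventually_const (i₀ := N)
        intro n hn
        rw [cutoff_one (hN.trans (Nat.cast_le.mpr hn))]
        ring)
    rwa [hynorm] at hDCT
  have hR : Tendsto (fun n : ℕ => ∫ t in Ioi (0:ℝ),
      ((-(deriv Real.smoothTransition ((n:ℝ)+1-t)) * y t + cutoff (n:ℝ) t * deriv y t)^2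
        + (t+ζ)^2 * (cutoff (n:ℝ) t * y t)^2))
      atTop (nhds (∫ t in Ioi (0:ℝ), ((deriv y t)^2 + (t + ζ)^2 * (y t)^2))) := by
    apply tendsto_integral_of_dominated_convergence
      (bound := fun t => C^2*(y t)^2 + 2*C*|y t * deriv y t| + (deriv y t)^2 + (t+ζ)^2*(y t)^2)
    · intro n
      apply Continuous.aestronglyMeasurable
      apply Continuous.add
      · exact (((sT_deriv_cont.comp (continuous_const.sub continuous_id)).neg.mul hyd.continuous).add
          ((cutoff_continuous _).mul hyd2'.continuous)).pow 2
      · exact (((continuous_id.add continuous_const).pow 2)).mul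
          (((cutoff_continuous _).mul hyd.continuous).pow 2)
    · exact hdomint
    · intro n
      filter_upwards with t
      rw [Real.norm_eq_abs, abs_of_nonneg (by positivity)]
      have hb1 : (-(deriv Real.smoothTransition ((n:ℝ)+1-t)) * y t + cutoff (n:ℝ) t * deriv y t)^2
          ≤ C^2*(y t)^2 + 2*C*|y t * deriv y t| + (deriv y t)^2 := by
        apply sq_cutoff_bound
        · rw [abs_neg]; exact hCb _
        · rw [abs_of_nonneg (cutoff_nonneg _ _)]; exact cutoff_le_one _ _
      have hb2 : (t+ζ)^2 * (cutoff (n:ℝ) t * y t)^2 ≤ (t+ζ)^2*(y t)^2 := by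
        have h1 := cutoff_nonneg (n:ℝ) t
        have h2 := cutoff_le_one (n:ℝ) t
        have h3 : cutoff (n:ℝ) t^2 ≤ 1 := by nlinarith
        have h4 : (cutoff (n:ℝ) t * y t)^2 ≤ (y t)^2 := by
          nlinarith [mul_le_mul_of_nonneg_right h3 (sq_nonneg (y t))]
        nlinarith [mul_le_mul_of_nonneg_left h4 (sq_nonneg (t+ζ))]
      linarith
    · filter_upwards with t
      obtain ⟨N, hN⟩ := exists_nat_ge (t+1)
      apply tendsto_atTop_of_eventually_const (i₀ := N)
      intro n hn
      have htn : t + 1 ≤ (n:ℝ) := hN.trans (Nat.cast_le.mpr hn)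
      rw [cutoff_one (by linarith), sT_deriv_zero_of_gt (by linarith)]
      ring
  have := le_of_tendsto_of_tendsto' hL hR main
  linarith

lemma integrable_quartic_mul_sq {y : ℝ → ℝ}
    (hint : ∀ k : ℕ, Integrable (fun t => t^k * (y t)^2) (volume.restrict (Ioi (0:ℝ))))
    (c0 c1 c2 c3 c4 : ℝ) :
    Integrable (fun t => (c4*t^4 + c3*t^3 + c2*t^2 + c1*t + c0) * (y t)^2)
      (volume.restrict (Ioi (0:ℝ))) := by
  have hsum := ((((hint 4).const_mul c4).add ((hint 3).const_mul c3)).add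
    (((hint 2).const_mul c2).add (((hint 1).const_mul c1).add ((hint 0).const_mul c0))))
  have heqf : (fun t => (c4*t^4 + c3*t^3 + c2*t^2 + c1*t + c0) * (y t)^2)
      = fun t => (c4*(t^4*(y t)^2) + c3*(t^3*(y t)^2))
        + (c2*(t^2*(y t)^2) + (c1*(t^1*(y t)^2) + c0*(t^0*(y t)^2))) := by
    funext t; ring
  rw [heqf]
  exact hsum

theorem FH_DH {μ : ℝ → ℝ} {u : ℝ → ℝ → ℝ}
    (hsmooth : ∀ ξ, ContDiff ℝ (⊤:ℕ∞) (u ξ))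
    (heq : ∀ ξ t, 0 ≤ t → deriv (deriv (u ξ)) t = ((t+ξ)^2 - μ ξ) * u ξ t)
    (hneum : ∀ ξ, deriv (u ξ) 0 = 0)
    (hpos : ∀ ξ t, 0 ≤ t → 0 < u ξ t)
    (hnorm : ∀ ξ, ∫ t in Ioi (0:ℝ), (u ξ t)^2 = 1)
    (hdecay : ∀ ξ, ∀ k : ℕ, Integrable (fun t => t^k * (u ξ t)^2) (volume.restrict (Ioi (0:ℝ))))
    (hμd : Differentiable ℝ μ) :
    ∀ ξ : ℝ, deriv μ ξ = 2 * (∫ t in Ioi (0:ℝ), (t+ξ)*(u ξ t)^2) ∧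
      -2 * (∫ t in Ioi (0:ℝ), (t+ξ)*(u ξ t)^2) = (ξ^2 - μ ξ) * (u ξ 0)^2 := by
  have hE := fun ξ : ℝ => energy_identity (hsmooth ξ) (heq ξ) (hneum ξ) (hpos ξ)
    (hnorm ξ) (hdecay ξ)
  have hPint : ∀ ξ : ℝ, Integrable (fun t => (t+ξ)*(u ξ t)^2) (volume.restrict (Ioi (0:ℝ))) := by
    intro ξ
    have := integrable_quartic_mul_sq (hdecay ξ) ξ 1 0 0 0
    have heqf : (fun t => (t+ξ)*(u ξ t)^2)
        = fun t => ((0:ℝ)*t^4 + 0*t^3 + 0*t^2 + 1*t + ξ) * (u ξ t)^2 := by funext t; ring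
    rw [heqf]
    exact this
  have hu2int : ∀ ξ : ℝ, Integrable (fun t => (u ξ t)^2) (volume.restrict (Ioi (0:ℝ))) := by
    intro ξ; simpa using hdecay ξ 0
  -- Q expansion
  have hQ : ∀ ζ ξ : ℝ, (∫ t in Ioi (0:ℝ), ((deriv (u ξ) t)^2 + (t+ζ)^2 * (u ξ t)^2))
      = μ ξ + 2*(ζ-ξ)*(∫ t in Ioi (0:ℝ), (t+ξ)*(u ξ t)^2) + (ζ-ξ)^2 := by
    intro ζ ξ
    have hsplit : (fun t => (deriv (u ξ) t)^2 + (t+ζ)^2 * (u ξ t)^2)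
        = fun t => ((deriv (u ξ) t)^2 + (t+ξ)^2 * (u ξ t)^2)
          + ((2*(ζ-ξ))*((t+ξ)*(u ξ t)^2) + ((ζ-ξ)^2)*(u ξ t)^2) := by
      funext t; ring
    have hadd1 : Integrable (fun t => 2*(ζ-ξ)*((t+ξ)*(u ξ t)^2) + (ζ-ξ)^2*(u ξ t)^2)
        (volume.restrict (Ioi (0:ℝ))) :=
      ((hPint ξ).const_mul _).add ((hu2int ξ).const_mul _)
    rw [hsplit]
    rw [integral_add ((hE ξ).1) hadd1]
    rw [integral_add ((hPint ξ).const_mul _) ((hu2int ξ).const_mul _)]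
    rw [MeasureTheory.integral_const_mul, MeasureTheory.integral_const_mul]
    rw [(hE ξ).2.1, hnorm ξ]
    ring
  have hvar : ∀ ζ ξ : ℝ, μ ζ ≤ μ ξ + 2*(ζ-ξ)*(∫ t in Ioi (0:ℝ), (t+ξ)*(u ξ t)^2) + (ζ-ξ)^2 := by
    intro ζ ξ
    rw [← hQ ζ ξ]
    exact variational_le (hsmooth ζ) (heq ζ) (hneum ζ) (hpos ζ) (hsmooth ξ)
      (hnorm ξ) (hdecay ξ) ((hE ξ).2.2)
  intro ξ
  set P : ℝ := ∫ t in Ioi (0:ℝ), (t+ξ)*(u ξ t)^2 with hPdef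
  have hFH : deriv μ ξ = 2 * P := by
    set g : ℝ → ℝ := fun ζ => μ ξ + 2*(ζ-ξ)*P + (ζ-ξ)^2 - μ ζ with hgdef
    have hg0 : g ξ = 0 := by simp [hgdef]
    have hgmin : IsLocalMin g ξ := by
      apply Filter.Eventually.of_forall
      intro ζ
      rw [hg0]
      have := hvar ζ ξ
      simp only [hgdef]
      linarith
    have hgd : HasDerivAt g (2*P + 2*(ξ-ξ) - deriv μ ξ) ξ := by
      have hA : HasDerivAt (fun ζ : ℝ => 2*(ζ-ξ)*P) (2*P) ξ := by
        have h := ((hasDerivAt_id ξ).sub_const ξ).const_mul (2*P)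
        have heqf : (fun ζ : ℝ => 2*(ζ-ξ)*P) = fun ζ : ℝ => (2*P)*(ζ - ξ) := by
          funext ζ; ring
        rw [heqf]
        simpa using h
      have hB : HasDerivAt (fun ζ : ℝ => (ζ-ξ)^2) (2*(ξ-ξ)) ξ := by
        have h := ((hasDerivAt_id ξ).sub_const ξ).pow 2
        exact h.congr_deriv (by simp)
      have hC : HasDerivAt μ (deriv μ ξ) ξ := (hμd ξ).hasDerivAt
      have := ((hA.const_add (μ ξ)).add hB).sub hC
      exact this
    have := hgmin.deriv_eq_zero
    rw [hgd.deriv] at this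
    simp only [sub_self, mul_zero, add_zero] at this
    linarith
  refine ⟨hFH, ?_⟩
  -- Dauge-Helffer identity by FTC
  have hyd : Differentiable ℝ (u ξ) := (hsmooth ξ).differentiable (by norm_num)
  have hyd2 : ContDiff ℝ (⊤:ℕ∞) (deriv (u ξ)) := (contDiff_infty_iff_deriv.mp (hsmooth ξ)).2
  have hyd2' : Differentiable ℝ (deriv (u ξ)) := hyd2.differentiable (by norm_num)
  obtain ⟨hnegd, hdecayk, hdecayk'⟩ := eigen_decay (hsmooth ξ) (heq ξ) (hpos ξ) (hdecay ξ)
  have hy0 : Tendsto (u ξ) atTop (nhds 0) := by simpa using hdecayk 0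
  have hy'0 : Tendsto (deriv (u ξ)) atTop (nhds 0) := by simpa using hdecayk' 0
  set G : ℝ → ℝ := fun t => (deriv (u ξ) t)^2 - ((t+ξ)^2 - μ ξ)*(u ξ t)^2 with hGdef
  have hGd : ∀ t : ℝ, 0 ≤ t → HasDerivAt G (-2*(t+ξ)*(u ξ t)^2) t := by
    intro t ht
    have h1 : HasDerivAt (fun s => (deriv (u ξ) s)^2)
        ((2:ℕ) * (deriv (u ξ) t)^1 * deriv (deriv (u ξ)) t) t :=
      ((hyd2' t).hasDerivAt).pow 2
    have hq : HasDerivAt (fun s : ℝ => (s+ξ)^2 - μ ξ) ((2:ℕ)*(t+ξ)^1*1) t := by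
      exact (((hasDerivAt_id t).add_const ξ).pow 2).sub_const (μ ξ)
    have h2 : HasDerivAt (fun s => ((s+ξ)^2 - μ ξ)*(u ξ s)^2)
        (((2:ℕ)*(t+ξ)^1*1) * (u ξ t)^2 + ((t+ξ)^2 - μ ξ) * ((2:ℕ)*(u ξ t)^1*deriv (u ξ) t)) t :=
      hq.mul (((hyd t).hasDerivAt).pow 2)
    have := h1.sub h2
    refine this.congr_deriv ?_
    rw [heq ξ t ht]
    push_cast
    ring
  have hfint : IntegrableOn (fun t => -2*(t+ξ)*(u ξ t)^2) (Ioi (0:ℝ)) volume := by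
    have := (hPint ξ).const_mul (-2)
    have heqf : (fun t => -2*(t+ξ)*(u ξ t)^2) = fun t => (-2)*((t+ξ)*(u ξ t)^2) := by
      funext t; ring
    rw [heqf]
    exact this
  have hfc : Continuous (fun t => -2*(t+ξ)*(u ξ t)^2) := by
    exact (continuous_const.mul (continuous_id.add continuous_const)).mul (hyd.continuous.pow 2)
  have hGlim := tendsto_FTC hGd hfint hfc
  have hG0' : Tendsto G atTop (nhds 0) := by
    have hA : Tendsto (fun t => (deriv (u ξ) t)^2) atTop (nhds 0) := by
      have := hy'0.mul hy'0
      rw [mul_zero] at this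
      apply this.congr
      intro t; ring
    have hB : Tendsto (fun t => ((t+ξ)^2 - μ ξ)*(u ξ t)^2) atTop (nhds 0) := by
      have h2 := (hdecayk 2).mul hy0
      have h1 := ((hdecayk 1).mul hy0).const_mul (2*ξ)
      have h0 := (hy0.mul hy0).const_mul (ξ^2 - μ ξ)
      have hsum := (h2.add h1).add h0
      simp only [mul_zero, zero_mul, add_zero, zero_add] at hsum
      apply hsum.congr
      intro t; ring
    have := hA.sub hB
    rw [sub_zero] at this
    exact this
  have hval := tendsto_nhds_unique hG0' hGlim
  have hG0 : G 0 = -(ξ^2 - μ ξ)*(u ξ 0)^2 := by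
    simp only [hGdef, hneum ξ]
    ring_nf
  have hintval : ∫ t in Ioi (0:ℝ), (-2*(t+ξ)*(u ξ t)^2) = -2 * P := by
    rw [hPdef, ← MeasureTheory.integral_const_mul]
    congr 1
    funext t
    ring
  rw [hintval, hG0] at hval
  linarith

set_option maxHeartbeats 1000000 in
theorem v_identity {ξ₀ : ℝ} {u v : ℝ → ℝ}
    (hu : ContDiff ℝ (⊤:ℕ∞) u)
    (hueq : ∀ t, 0 ≤ t → deriv (deriv u) t = ((t+ξ₀)^2 - ξ₀^2) * u t)
    (huneum : deriv u 0 = 0)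
    (hupos : ∀ t, 0 ≤ t → 0 < u t)
    (hunorm : ∫ t in Ioi (0:ℝ), (u t)^2 = 1)
    (huint : ∀ k : ℕ, Integrable (fun t => t^k * (u t)^2) (volume.restrict (Ioi (0:ℝ))))
    (hv : ContDiff ℝ (⊤:ℕ∞) v)
    (hveq : ∀ t, 0 ≤ t → deriv (deriv v) t = ((t+ξ₀)^2 - ξ₀^2) * v t - (t+ξ₀) * u t)
    (hvneum : deriv v 0 = 0)
    (hvL2 : Integrable (fun t => t^2 * (v t)^2) (volume.restrict (Ioi (0:ℝ)))) :
    1 - 4 * (∫ t in Ioi (0:ℝ), (t + ξ₀) * v t * u t) = -ξ₀ * (u 0)^2 := by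
  have hud : Differentiable ℝ u := hu.differentiable (by norm_num)
  have hud2 : ContDiff ℝ (⊤:ℕ∞) (deriv u) := (contDiff_infty_iff_deriv.mp hu).2
  have hud2' : Differentiable ℝ (deriv u) := hud2.differentiable (by norm_num)
  have hvd : Differentiable ℝ v := hv.differentiable (by norm_num)
  have hvd2 : ContDiff ℝ (⊤:ℕ∞) (deriv v) := (contDiff_infty_iff_deriv.mp hv).2
  have hvd2' : Differentiable ℝ (deriv v) := hvd2.differentiable (by norm_num)
  obtain ⟨_, hdk, hdk'⟩ := eigen_decay hu hueq hupos huint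
  have hu0 : Tendsto u atTop (nhds 0) := by simpa using hdk 0
  have hu'0 : Tendsto (deriv u) atTop (nhds 0) := by simpa using hdk' 0
  have hu2int : Integrable (fun t => (u t)^2) (volume.restrict (Ioi (0:ℝ))) := by
    simpa using huint 0
  -- v² is integrable
  have hv2 : Integrable (fun t => (v t)^2) (volume.restrict (Ioi (0:ℝ))) := by
    have hA : IntegrableOn (fun t => (v t)^2) (Ioc (0:ℝ) 1) volume :=
      ((hv.continuous).pow 2).integrableOn_Ioc
    have hvL2' : IntegrableOn (fun t => t^2*(v t)^2) (Ioi (0:ℝ)) volume := hvL2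
    have hB : IntegrableOn (fun t => (v t)^2) (Ioi (1:ℝ)) volume := by
      apply Integrable.mono (hvL2'.mono_set (Ioi_subset_Ioi zero_le_one))
        (((hv.continuous).pow 2).aestronglyMeasurable)
      rw [ae_restrict_iff' measurableSet_Ioi]
      filter_upwards with t ht
      have h1 : (1:ℝ) < t := ht
      simp only [Real.norm_eq_abs, Pi.pow_apply]
      rw [abs_of_nonneg (sq_nonneg (v t)), abs_of_nonneg (show (0:ℝ) ≤ t^2*(v t)^2 by positivity)]
      nlinarith [mul_nonneg (show (0:ℝ) ≤ t^2 - 1 by nlinarith) (sq_nonneg (v t))]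
    have := hA.union hB
    rwa [Ioc_union_Ioi_eq_Ioi zero_le_one] at this
  -- integrable products
  have habs2 : ∀ (a b : ℝ), |2*a*b| ≤ a^2 + b^2 := by
    intro a b
    apply abs_le.mpr
    constructor
    · nlinarith [sq_nonneg (a+b)]
    · nlinarith [sq_nonneg (a-b)]
  have htu2 : Integrable (fun t => (t+ξ₀)^2*(u t)^2) (volume.restrict (Ioi (0:ℝ))) := by
    have := integrable_quartic_mul_sq huint (ξ₀^2) (2*ξ₀) 1 0 0
    have heqf : (fun t => (t+ξ₀)^2*(u t)^2)
        = fun t => ((0:ℝ)*t^4 + 0*t^3 + 1*t^2 + (2*ξ₀)*t + ξ₀^2)*(u t)^2 := by funext t; ring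
    rw [heqf]; exact this
  have hq2int : Integrable (fun t => ((t+ξ₀)^2-ξ₀^2)^2*(u t)^2) (volume.restrict (Ioi (0:ℝ))) := by
    have := integrable_quartic_mul_sq huint 0 0 (4*ξ₀^2) (4*ξ₀) 1
    have heqf : (fun t => ((t+ξ₀)^2-ξ₀^2)^2*(u t)^2)
        = fun t => ((1:ℝ)*t^4 + (4*ξ₀)*t^3 + (4*ξ₀^2)*t^2 + 0*t + 0)*(u t)^2 := by funext t; ring
    rw [heqf]; exact this
  have hPlike : Integrable (fun t => (t+ξ₀)*(u t)^2) (volume.restrict (Ioi (0:ℝ))) := by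
    have := integrable_quartic_mul_sq huint ξ₀ 1 0 0 0
    have heqf : (fun t => (t+ξ₀)*(u t)^2)
        = fun t => ((0:ℝ)*t^4 + 0*t^3 + 0*t^2 + 1*t + ξ₀)*(u t)^2 := by funext t; ring
    rw [heqf]; exact this
  have huvint : Integrable (fun t => 2*(t+ξ₀)*u t*v t) (volume.restrict (Ioi (0:ℝ))) := by
    apply Integrable.mono (htu2.add hv2)
      ((((continuous_const.mul (continuous_id.add continuous_const)).mul hud.continuous).mul
        hvd.continuous).aestronglyMeasurable)
    filter_upwards with t
    simp only [Real.norm_eq_abs, Pi.add_apply]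
    rw [abs_of_nonneg (show (0:ℝ) ≤ (t+ξ₀)^2*(u t)^2 + (v t)^2 by positivity)]
    calc |2*(t+ξ₀)*u t*v t| = |2*((t+ξ₀)*u t)*v t| := by ring_nf
      _ ≤ ((t+ξ₀)*u t)^2 + (v t)^2 := habs2 _ _
      _ = (t+ξ₀)^2*(u t)^2 + (v t)^2 := by ring
  have hquv : Integrable (fun t => 2*((t+ξ₀)^2-ξ₀^2)*u t*v t) (volume.restrict (Ioi (0:ℝ))) := by
    apply Integrable.mono (hq2int.add hv2)
      ((((continuous_const.mul (((continuous_id.add continuous_const).pow 2).sub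
        continuous_const)).mul hud.continuous).mul hvd.continuous).aestronglyMeasurable)
    filter_upwards with t
    simp only [Real.norm_eq_abs, Pi.add_apply]
    rw [abs_of_nonneg (show (0:ℝ) ≤ ((t+ξ₀)^2-ξ₀^2)^2*(u t)^2 + (v t)^2 by positivity)]
    calc |2*((t+ξ₀)^2-ξ₀^2)*u t*v t| = |2*(((t+ξ₀)^2-ξ₀^2)*u t)*v t| := by ring_nf
      _ ≤ (((t+ξ₀)^2-ξ₀^2)*u t)^2 + (v t)^2 := habs2 _ _
      _ = ((t+ξ₀)^2-ξ₀^2)^2*(u t)^2 + (v t)^2 := by ring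
  -- derivative of H
  have hqd : ∀ t : ℝ, HasDerivAt (fun s : ℝ => (s+ξ₀)^2 - ξ₀^2) ((2:ℕ)*(t+ξ₀)^1*1) t :=
    fun t => (((hasDerivAt_id t).add_const ξ₀).pow 2).sub_const _
  have hHd : ∀ t : ℝ, 0 ≤ t → HasDerivAt
      (fun t => deriv u t * deriv v t - ((t+ξ₀)^2-ξ₀^2) * u t * v t + (t+ξ₀)*(u t)^2/2)
      ((u t)^2/2 - 2*(t+ξ₀)*u t*v t) t := by
    intro t ht
    have h1 := (hud2' t).hasDerivAt.mul ((hvd2' t).hasDerivAt)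
    have h2 := ((hqd t).mul ((hud t).hasDerivAt)).mul ((hvd t).hasDerivAt)
    have h3 := (((hasDerivAt_id t).add_const ξ₀).mul (((hud t).hasDerivAt).pow 2)).div_const 2
    have htotal := (h1.sub h2).add h3
    refine htotal.congr_deriv ?_
    rw [hueq t ht, hveq t ht]
    push_cast
    simp only [id_eq, Pi.mul_apply, Pi.pow_apply]
    ring
  have hHintg : Integrable (fun t => (u t)^2/2 - 2*(t+ξ₀)*u t*v t)
      (volume.restrict (Ioi (0:ℝ))) := (hu2int.div_const 2).sub huvint
  have hHintc : Continuous (fun t => (u t)^2/2 - 2*(t+ξ₀)*u t*v t) := by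
    apply Continuous.sub
    · exact (hud.continuous.pow 2).div_const 2
    · exact ((continuous_const.mul (continuous_id.add continuous_const)).mul
        hud.continuous).mul hvd.continuous
  have hHlim := tendsto_FTC hHd hHintg hHintc
  have hHcont : Continuous (fun t => deriv u t * deriv v t - ((t+ξ₀)^2-ξ₀^2) * u t * v t
      + (t+ξ₀)*(u t)^2/2) := by
    apply Continuous.add
    · apply Continuous.sub
      · exact hud2'.continuous.mul hvd2'.continuous
      · exact (((((continuous_id.add continuous_const).pow 2).sub continuous_const).mul
          hud.continuous).mul hvd.continuous)
    · exact ((continuous_id.add continuous_const).mul (hud.continuous.pow 2)).div_const 2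
  -- value of the integral
  have hIval : ∫ t in Ioi (0:ℝ), ((u t)^2/2 - 2*(t+ξ₀)*u t*v t)
      = 1/2 - 2*(∫ t in Ioi (0:ℝ), (t + ξ₀) * v t * u t) := by
    rw [integral_sub (hu2int.div_const 2) huvint]
    have e1 : ∫ t in Ioi (0:ℝ), (u t)^2/2 = 1/2 := by
      rw [MeasureTheory.integral_div, hunorm]
    have e2 : ∫ t in Ioi (0:ℝ), 2*(t+ξ₀)*u t*v t
        = 2*(∫ t in Ioi (0:ℝ), (t + ξ₀) * v t * u t) := by
      rw [← MeasureTheory.integral_const_mul]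
      congr 1; funext t; ring
    rw [e1, e2]
  -- frequently |v| ≤ 1
  have hfreq : ∃ᶠ R in atTop, |v R| ≤ 1 := by
    rw [frequently_atTop]
    intro b
    by_contra hcon
    push_neg at hcon
    have h1 : IntegrableOn (fun _ : ℝ => (1:ℝ)) (Ioi (max b 1)) volume := by
      have hvL2'' : IntegrableOn (fun t => t^2*(v t)^2) (Ioi (0:ℝ)) volume := hvL2
      apply Integrable.mono (hvL2''.mono_set (Ioi_subset_Ioi (le_trans zero_le_one (le_max_right b 1))))
        aestronglyMeasurable_const
      rw [ae_restrict_iff' measurableSet_Ioi]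
      filter_upwards with t ht
      have ht1 : (1:ℝ) < t := lt_of_le_of_lt (le_max_right b 1) ht
      have hvt := hcon t (le_of_lt (lt_of_le_of_lt (le_max_left b 1) ht))
      have h2 : 1 ≤ (v t)^2 := by nlinarith [sq_abs (v t), abs_nonneg (v t)]
      have h3 : (1:ℝ) ≤ t^2 := by nlinarith
      simp only [norm_one, Real.norm_eq_abs]
      rw [abs_of_nonneg (show (0:ℝ) ≤ t^2*(v t)^2 by positivity)]
      nlinarith
    exact not_integrableOn_const_Ioi one_pos h1
  -- φ bound
  have hφint : Integrable (fun t => 2*((t+ξ₀)^2-ξ₀^2)*u t*v t - (t+ξ₀)*(u t)^2/2)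
      (volume.restrict (Ioi (0:ℝ))) := hquv.sub (hPlike.div_const 2)
  have hφc : Continuous (fun t => 2*((t+ξ₀)^2-ξ₀^2)*u t*v t - (t+ξ₀)*(u t)^2/2) := by
    apply Continuous.sub
    · exact (((continuous_const.mul (((continuous_id.add continuous_const).pow 2).sub
        continuous_const)).mul hud.continuous).mul hvd.continuous)
    · exact ((continuous_id.add continuous_const).mul (hud.continuous.pow 2)).div_const 2
  have hφabs := hφint.abs
  have hCφnn : 0 ≤ ∫ t in Ioi (0:ℝ), |2*((t+ξ₀)^2-ξ₀^2)*u t*v t - (t+ξ₀)*(u t)^2/2| := by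
    apply setIntegral_nonneg measurableSet_Ioi
    intro t _; positivity
  have hCφ : ∀ T R : ℝ, 0 ≤ T → T ≤ R →
      |∫ t in T..R, (2*((t+ξ₀)^2-ξ₀^2)*u t*v t - (t+ξ₀)*(u t)^2/2)|
        ≤ ∫ t in Ioi (0:ℝ), |2*((t+ξ₀)^2-ξ₀^2)*u t*v t - (t+ξ₀)*(u t)^2/2| := by
    intro T R hT hTR
    calc |∫ t in T..R, (2*((t+ξ₀)^2-ξ₀^2)*u t*v t - (t+ξ₀)*(u t)^2/2)|
        ≤ ∫ t in T..R, |2*((t+ξ₀)^2-ξ₀^2)*u t*v t - (t+ξ₀)*(u t)^2/2| :=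
          intervalIntegral.abs_integral_le_integral_abs hTR
      _ = ∫ t in Ioc T R, |2*((t+ξ₀)^2-ξ₀^2)*u t*v t - (t+ξ₀)*(u t)^2/2| :=
          intervalIntegral.integral_of_le hTR
      _ ≤ ∫ t in Ioi (0:ℝ), |2*((t+ξ₀)^2-ξ₀^2)*u t*v t - (t+ξ₀)*(u t)^2/2| := by
          apply setIntegral_mono_set hφabs
          · rw [EventuallyLE, ae_restrict_iff' measurableSet_Ioi]
            filter_upwards with t _
            positivity
          · have hsub : Ioc T R ⊆ Ioi (0:ℝ) := fun x hx => lt_of_le_of_lt hT hx.1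
            exact hsub.eventuallyLE
  -- FTC for K on [T,R]
  have hKftc : ∀ T R : ℝ, 0 ≤ T → T ≤ R →
      deriv u R * v R - deriv u T * v T
        = (∫ t in T..R, (deriv u t * deriv v t - ((t+ξ₀)^2-ξ₀^2) * u t * v t + (t+ξ₀)*(u t)^2/2))
          + ∫ t in T..R, (2*((t+ξ₀)^2-ξ₀^2)*u t*v t - (t+ξ₀)*(u t)^2/2) := by
    intro T R hT hTR
    have hKd : ∀ x ∈ uIcc T R, HasDerivAt (fun t => deriv u t * v t)
        ((deriv u x * deriv v x - ((x+ξ₀)^2-ξ₀^2) * u x * v x + (x+ξ₀)*(u x)^2/2)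
          + (2*((x+ξ₀)^2-ξ₀^2)*u x*v x - (x+ξ₀)*(u x)^2/2)) x := by
      intro x hx
      rw [uIcc_of_le hTR] at hx
      have hx0 : (0:ℝ) ≤ x := le_trans hT hx.1
      have h1 := (hud2' x).hasDerivAt.mul ((hvd x).hasDerivAt)
      refine h1.congr_deriv ?_
      rw [hueq x hx0]
      ring
    have := intervalIntegral.integral_eq_sub_of_hasDerivAt hKd
      ((hHcont.add hφc).intervalIntegrable _ _)
    rw [intervalIntegral.integral_add (hHcont.intervalIntegrable _ _)
      (hφc.intervalIntegrable _ _)] at this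
    linarith [this]
  -- |deriv u| eventually ≤ 1
  have hu'small : ∀ᶠ R in atTop, |deriv u R| ≤ 1 := by
    have h1 := hu'0.eventually (eventually_le_nhds (by norm_num : (0:ℝ) < 1))
    have h2 := hu'0.eventually (eventually_ge_nhds (by norm_num : (-1:ℝ) < 0))
    filter_upwards [h1, h2] with R hR1 hR2
    exact abs_le.mpr ⟨hR2, hR1⟩
  -- the limit L must be zero
  set Cφ : ℝ := ∫ t in Ioi (0:ℝ), |2*((t+ξ₀)^2-ξ₀^2)*u t*v t - (t+ξ₀)*(u t)^2/2| with hCφdef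
  clear_value Cφ
  set L : ℝ := (deriv u 0 * deriv v 0 - ((0+ξ₀)^2-ξ₀^2) * u 0 * v 0 + (0+ξ₀)*(u 0)^2/2)
    + ∫ t in Ioi (0:ℝ), ((u t)^2/2 - 2*(t+ξ₀)*u t*v t) with hLdef
  clear_value L
  have hL0 : L = 0 := by
    rcases lt_trichotomy L 0 with hL | hL | hL
    · exfalso
      have hev : ∀ᶠ R in atTop, (deriv u R * deriv v R - ((R+ξ₀)^2-ξ₀^2) * u R * v R
          + (R+ξ₀)*(u R)^2/2) ≤ L/2 := hHlim.eventually (eventually_le_nhds (by linarith))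
      obtain ⟨T0, hT0⟩ := eventually_atTop.mp hev
      set T : ℝ := max T0 0 with hTdef
      have hTnn : (0:ℝ) ≤ T := le_max_right _ _
      have hTa : T0 ≤ T := le_max_left _ _
      clear_value T
      have hball : ∀ R, T ≤ R → deriv u R * v R ≤ deriv u T * v T + L/2*(R-T) + Cφ := by
        intro R hTR
        have h1 := hKftc T R hTnn hTR
        have h2 : ∫ t in T..R, (deriv u t * deriv v t - ((t+ξ₀)^2-ξ₀^2) * u t * v t
            + (t+ξ₀)*(u t)^2/2) ≤ ∫ t in T..R, (L/2) := by
          apply intervalIntegral.integral_mono_on hTR (hHcont.intervalIntegrable _ _)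
            intervalIntegrable_const
          intro x hx
          exact hT0 x (le_trans hTa hx.1)
        rw [intervalIntegral.integral_const, smul_eq_mul] at h2
        have h3 := hCφ T R hTnn hTR
        have h4 := neg_abs_le (∫ t in T..R, (2*((t+ξ₀)^2-ξ₀^2)*u t*v t - (t+ξ₀)*(u t)^2/2))
        have h5 := le_abs_self (∫ t in T..R, (2*((t+ξ₀)^2-ξ₀^2)*u t*v t - (t+ξ₀)*(u t)^2/2))
        nlinarith
      set R₀ : ℝ := max T (T + (2/L)*(-2 - deriv u T * v T - Cφ)) with hR₀def
      have hR₀a : T ≤ R₀ := le_max_left _ _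
      have hR₀b : T + (2/L)*(-2 - deriv u T * v T - Cφ) ≤ R₀ := le_max_right _ _
      clear_value R₀
      obtain ⟨R, ⟨hRv, hRu, hRge⟩⟩ :=
        (hfreq.and_eventually (hu'small.and (eventually_ge_atTop R₀))).exists
      have hRT : T ≤ R := le_trans hR₀a hRge
      have hKR := hball R hRT
      have hRD : T + (2/L)*(-2 - deriv u T * v T - Cφ) ≤ R := le_trans hR₀b hRge
      have hL2 : L/2 < 0 := by linarith
      have hKR2 : deriv u R * v R ≤ -2 := by
        have hmul : L/2*(R-T) ≤ L/2*((2/L)*(-2 - deriv u T * v T - Cφ)) := by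
          apply mul_le_mul_of_nonpos_left _ (le_of_lt hL2)
          linarith
        have hLne : L ≠ 0 := ne_of_lt hL
        have : L/2*((2/L)*(-2 - deriv u T * v T - Cφ)) = -2 - deriv u T * v T - Cφ := by
          field_simp
        rw [this] at hmul
        linarith
      have habsK : |deriv u R * v R| ≤ 1 := by
        rw [abs_mul]
        calc |deriv u R| * |v R| ≤ 1 * 1 :=
          mul_le_mul hRu hRv (abs_nonneg _) zero_le_one
        _ = 1 := by ring
      have := neg_abs_le (deriv u R * v R)
      linarith
    · exact hL
    · exfalso
      have hev : ∀ᶠ R in atTop, (deriv u R * deriv v R - ((R+ξ₀)^2-ξ₀^2) * u R * v R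
          + (R+ξ₀)*(u R)^2/2) ≥ L/2 := hHlim.eventually (eventually_ge_nhds (by linarith))
      obtain ⟨T0, hT0⟩ := eventually_atTop.mp hev
      set T : ℝ := max T0 0 with hTdef
      have hTnn : (0:ℝ) ≤ T := le_max_right _ _
      have hTa : T0 ≤ T := le_max_left _ _
      clear_value T
      have hball : ∀ R, T ≤ R → deriv u T * v T + L/2*(R-T) - Cφ ≤ deriv u R * v R := by
        intro R hTR
        have h1 := hKftc T R hTnn hTR
        have h2 : ∫ t in T..R, (L/2) ≤ ∫ t in T..R, (deriv u t * deriv v t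
            - ((t+ξ₀)^2-ξ₀^2) * u t * v t + (t+ξ₀)*(u t)^2/2) := by
          apply intervalIntegral.integral_mono_on hTR intervalIntegrable_const
            (hHcont.intervalIntegrable _ _)
          intro x hx
          exact hT0 x (le_trans hTa hx.1)
        rw [intervalIntegral.integral_const, smul_eq_mul] at h2
        have h3 := hCφ T R hTnn hTR
        have h4 := neg_abs_le (∫ t in T..R, (2*((t+ξ₀)^2-ξ₀^2)*u t*v t - (t+ξ₀)*(u t)^2/2))
        nlinarith
      set R₀ : ℝ := max T (T + (2/L)*(2 - deriv u T * v T + Cφ)) with hR₀def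
      have hR₀a : T ≤ R₀ := le_max_left _ _
      have hR₀b : T + (2/L)*(2 - deriv u T * v T + Cφ) ≤ R₀ := le_max_right _ _
      clear_value R₀
      obtain ⟨R, ⟨hRv, hRu, hRge⟩⟩ :=
        (hfreq.and_eventually (hu'small.and (eventually_ge_atTop R₀))).exists
      have hRT : T ≤ R := le_trans hR₀a hRge
      have hKR := hball R hRT
      have hRD : T + (2/L)*(2 - deriv u T * v T + Cφ) ≤ R := le_trans hR₀b hRge
      have hL2 : (0:ℝ) < L/2 := by linarith
      have hKR2 : 2 ≤ deriv u R * v R := by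
        have hmul : L/2*((2/L)*(2 - deriv u T * v T + Cφ)) ≤ L/2*(R-T) := by
          apply mul_le_mul_of_nonneg_left _ (le_of_lt hL2)
          linarith
        have hLne : L ≠ 0 := ne_of_gt hL
        have : L/2*((2/L)*(2 - deriv u T * v T + Cφ)) = 2 - deriv u T * v T + Cφ := by
          field_simp
        rw [this] at hmul
        linarith
      have habsK : |deriv u R * v R| ≤ 1 := by
        rw [abs_mul]
        calc |deriv u R| * |v R| ≤ 1 * 1 :=
          mul_le_mul hRu hRv (abs_nonneg _) zero_le_one
        _ = 1 := by ring
      have := le_abs_self (deriv u R * v R)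
      linarith
  -- conclude
  rw [hLdef] at hL0
  rw [hIval, huneum] at hL0
  nlinarith [hL0]

/-- With `I₂ = ∫ (t+ξ₀) R₀((t+ξ₀)u₀) u₀ dt` one has
`1 - 4I₂ = μ''(ξ₀)/2 = 3C₁√Θ₀ > 0`. -/
theorem I2_mu_second_derivative
    (μ : ℝ → ℝ) (u : ℝ → ℝ → ℝ) (ξ₀ : ℝ)
    (hsmooth : ∀ ξ, ContDiff ℝ (⊤ : ℕ∞) (u ξ))
    (heig : ∀ ξ t, 0 ≤ t →
      - deriv (deriv (u ξ)) t + (t + ξ)^2 * u ξ t = μ ξ * u ξ t)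
    (hneum : ∀ ξ, deriv (u ξ) 0 = 0)
    (hpos : ∀ ξ t, 0 ≤ t → 0 < u ξ t)
    (hnorm : ∀ ξ, ∫ t in Ioi (0:ℝ), (u ξ t)^2 = 1)
    (hdecay : ∀ ξ, ∀ k : ℕ,
      Integrable (fun t => t^k * (u ξ t)^2) (volume.restrict (Ioi (0:ℝ))))
    -- the family is differentiable in `ξ` at `ξ₀`
    (hdiffξ : ∀ t, DifferentiableAt ℝ (fun ξ => u ξ t) ξ₀)
    -- `ξ₀` is the minimum point of `μ`, so `μ'(ξ₀) = 0`
    (hmin : ∀ ξ, μ ξ₀ ≤ μ ξ)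
    -- `v` is the solution of `(H₀ - Θ₀)v = (t+ξ₀)u₀`, Neumann, orthogonal to `u₀`
    (v : ℝ → ℝ)
    (hv : ContDiff ℝ (⊤ : ℕ∞) v)
    (hveq : ∀ t, 0 ≤ t →
      - deriv (deriv v) t + (t + ξ₀)^2 * v t - μ ξ₀ * v t = (t + ξ₀) * u ξ₀ t)
    (hvneum : deriv v 0 = 0)
    (hvL2 : Integrable (fun t => t^2 * (v t)^2) (volume.restrict (Ioi (0:ℝ))))
    (hvorth : (∫ t in Ioi (0:ℝ), v t * u ξ₀ t) = 0)
    -- `μ` is smooth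
    (hμ : ContDiff ℝ (⊤ : ℕ∞) μ) :
    1 - 4 * (∫ t in Ioi (0:ℝ), (t + ξ₀) * v t * u ξ₀ t)
        = deriv (deriv μ) ξ₀ / 2
    ∧ deriv (deriv μ) ξ₀ / 2 = 3 * ((u ξ₀ 0)^2 / 3) * Real.sqrt (μ ξ₀)
    ∧ 0 < 3 * ((u ξ₀ 0)^2 / 3) * Real.sqrt (μ ξ₀) := by
  have hsm : ∀ ξ, ContDiff ℝ (⊤:ℕ∞) (u ξ) := fun ξ => (hsmooth ξ).of_le (by simp)
  have heq : ∀ ξ t, 0 ≤ t → deriv (deriv (u ξ)) t = ((t+ξ)^2 - μ ξ) * u ξ t := by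
    intro ξ t ht
    have h := heig ξ t ht
    linear_combination -h
  have hμd : Differentiable ℝ μ := hμ.differentiable (by norm_num)
  have hFH := FH_DH hsm heq hneum hpos hnorm hdecay hμd
  -- μ'(ξ₀) = 0
  have hmin' : IsLocalMin μ ξ₀ := Filter.Eventually.of_forall hmin
  have hd0 : deriv μ ξ₀ = 0 := hmin'.deriv_eq_zero
  have hP0 : (∫ t in Ioi (0:ℝ), (t+ξ₀)*(u ξ₀ t)^2) = 0 := by
    have h1 := (hFH ξ₀).1
    rw [hd0] at h1
    linarith
  have hc0 : 0 < (u ξ₀ 0)^2 := pow_pos (hpos ξ₀ 0 le_rfl) 2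
  have hmu0 : μ ξ₀ = ξ₀^2 := by
    have h2 := (hFH ξ₀).2
    rw [hP0] at h2
    have h3 : (ξ₀^2 - μ ξ₀) * (u ξ₀ 0)^2 = 0 := by linarith
    rcases mul_eq_zero.mp h3 with h | h
    · linarith
    · exact absurd h (ne_of_gt hc0)
  -- ξ₀ < 0
  have htint : Integrable (fun t => t*(u ξ₀ t)^2) (volume.restrict (Ioi (0:ℝ))) := by
    have := hdecay ξ₀ 1
    simpa [pow_one] using this
  have hu2int0 : Integrable (fun t => (u ξ₀ t)^2) (volume.restrict (Ioi (0:ℝ))) := by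
    simpa using hdecay ξ₀ 0
  have hsplitP : (∫ t in Ioi (0:ℝ), (t+ξ₀)*(u ξ₀ t)^2)
      = (∫ t in Ioi (0:ℝ), t*(u ξ₀ t)^2) + ξ₀ := by
    have heqf : (fun t => (t+ξ₀)*(u ξ₀ t)^2)
        = fun t => t*(u ξ₀ t)^2 + ξ₀*(u ξ₀ t)^2 := funext fun t => by ring
    rw [heqf, integral_add htint (hu2int0.const_mul ξ₀), MeasureTheory.integral_const_mul,
      hnorm ξ₀]
    ring
  have hT1 : 0 < ∫ t in Ioi (0:ℝ), t*(u ξ₀ t)^2 := by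
    apply (setIntegral_pos_iff_support_of_nonneg_ae ?_ ?_).mpr
    · have hss : Ioi (0:ℝ) ⊆ Function.support (fun t => t*(u ξ₀ t)^2) ∩ Ioi 0 := by
        intro x hx
        have hx0 : (0:ℝ) < x := hx
        refine ⟨?_, hx⟩
        rw [Function.mem_support]
        have := hpos ξ₀ x hx0.le
        positivity
      calc (0:ENNReal) < volume (Ioi (0:ℝ)) := by simp [Real.volume_Ioi]
        _ ≤ volume (Function.support (fun t => t*(u ξ₀ t)^2) ∩ Ioi 0) := measure_mono hss
    · rw [EventuallyLE, ae_restrict_iff' measurableSet_Ioi]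
      filter_upwards with t ht
      have : (0:ℝ) < t := ht
      positivity
    · exact htint
  have hxi : ξ₀ < 0 := by
    rw [hsplitP] at hP0
    linarith
  -- second derivative of μ
  have hderiv_eq : deriv μ = fun ξ => (μ ξ - ξ^2) * (u ξ 0)^2 := by
    funext ξ
    have h1 := (hFH ξ).1
    have h2 := (hFH ξ).2
    linear_combination h1 - h2
  have hmu'' : deriv (deriv μ) ξ₀ = -2*ξ₀*(u ξ₀ 0)^2 := by
    rw [hderiv_eq]
    have hcd : DifferentiableAt ℝ (fun ξ => (u ξ 0)^2) ξ₀ := (hdiffξ 0).pow 2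
    have hms : HasDerivAt (fun ξ => μ ξ - ξ^2) (deriv μ ξ₀ - 2*ξ₀) ξ₀ := by
      have h1 := (hμd ξ₀).hasDerivAt
      have h2 := hasDerivAt_pow 2 ξ₀
      have := h1.sub h2
      exact this.congr_deriv (by norm_num)
    have hprod := hms.mul hcd.hasDerivAt
    rw [HasDerivAt.deriv (f := fun ξ => (μ ξ - ξ ^ 2) * u ξ 0 ^ 2) hprod, hd0, hmu0]
    ring
  -- the v-identity
  have hueq0 : ∀ t, 0 ≤ t → deriv (deriv (u ξ₀)) t = ((t+ξ₀)^2 - ξ₀^2) * u ξ₀ t := by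
    intro t ht
    have := heq ξ₀ t ht
    rwa [hmu0] at this
  have hveq' : ∀ t, 0 ≤ t → deriv (deriv v) t = ((t+ξ₀)^2 - ξ₀^2) * v t - (t+ξ₀) * u ξ₀ t := by
    intro t ht
    have h := hveq t ht
    rw [hmu0] at h
    linear_combination -h
  have hVI := v_identity (hsm ξ₀) hueq0 (hneum ξ₀) (hpos ξ₀) (hnorm ξ₀) (hdecay ξ₀)
    (hv.of_le (by simp)) hveq' hvneum hvL2
  have hsq : Real.sqrt (μ ξ₀) = -ξ₀ := by
    rw [hmu0, Real.sqrt_sq_eq_abs, abs_of_neg hxi]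
  refine ⟨?_, ?_, ?_⟩
  · rw [hVI, hmu'']
    ring
  · rw [hmu'', hsq]
    ring
  · rw [hsq]
    have hneg : 0 < -ξ₀ := neg_pos.mpr hxi
    nlinarith [mul_pos hc0 hneg]
end
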